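/- arXiv:2511.22526 — 3 statements merged into one kernel-verified Lean document; each statement's English description precedes it below -/
import Mathlib

section
/- Let S be a set of n ≥ 4 points in general position in the plane, let a, b ∈ S be distinct, and let s ∈ S be arbitrary. Then there exists a plane Hamiltonian path on S such that one endpoint is s, the other endpoint is a or b, and the segment ab is not an edge of the path. -/
open Set
open scoped Classical

noncomputable section

/-- Points in the plane. -/
abbrev Pt : Type := ℝ × ℝ

/-- Orientation determinant of the triple `(a, b, p)`:
positive iff `p` lies strictly to the left of the directed line from `a` to `b`. -/
def det3 (a b p : Pt) : ℝ :=
  (b.1 - a.1) * (p.2 - a.2) - (b.2 - a.2) * (p.1 - a.1)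

/-- A finite point set is in general position if no three of its points are collinear. -/
def GenPos (S : Finset Pt) : Prop :=
  ∀ p ∈ S, ∀ q ∈ S, ∀ r ∈ S,
    p ≠ q → p ≠ r → q ≠ r → ¬ Collinear ℝ ({p, q, r} : Set Pt)

/-- The list of (directed) edges of a polygonal path given by its list of vertices. -/
def edgeList (l : List Pt) : List (Pt × Pt) := l.zip l.tail

/-- The segment `ab` is an edge of the path `l`, i.e. `a` and `b` are consecutive on `l`. -/
def IsEdgeOf (a b : Pt) (l : List Pt) : Prop :=
  (a, b) ∈ edgeList l ∨ (b, a) ∈ edgeList l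

/-- `l` is a plane (crossing-free) Hamiltonian path on the point set `S`:
its vertices are exactly the points of `S`, each visited once, and any two distinct
edges intersect only in common endpoints. -/
def PlanePath (S : Finset Pt) (l : List Pt) : Prop :=
  l.Nodup ∧ l.toFinset = S ∧
  ∀ e ∈ edgeList l, ∀ f ∈ edgeList l, e ≠ f →
    segment ℝ e.1 e.2 ∩ segment ℝ f.1 f.2 ⊆
      (({e.1, e.2} : Set Pt) ∩ ({f.1, f.2} : Set Pt))

/-- Two paths are edge-disjoint: no segment is an edge of both. -/
def EdgeDisjoint (l₁ l₂ : List Pt) : Prop :=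
  ∀ x y : Pt, IsEdgeOf x y l₁ → ¬ IsEdgeOf x y l₂

/-- `p` is a vertex of the boundary of the convex hull of `S`. -/
def HullVertex (S : Finset Pt) (p : Pt) : Prop :=
  p ∈ Set.extremePoints ℝ (convexHull ℝ (S : Set Pt))

/-- `ab` is an edge of the boundary of the convex hull of `S`, i.e. `a` and `b` are
consecutive hull vertices: all other points of `S` lie strictly on one side of line `ab`. -/
def IsHullEdge (S : Finset Pt) (a b : Pt) : Prop :=
  a ∈ S ∧ b ∈ S ∧ a ≠ b ∧
  ((∀ p ∈ S, p ≠ a → p ≠ b → 0 < det3 a b p) ∨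
   (∀ p ∈ S, p ≠ a → p ≠ b → det3 a b p < 0))

/-- The segment `xy` is a bridge over the line through `a` and `b`:
it crosses the line `ℓ(ab)` but not the segment `ab`. -/
def IsBridge (a b x y : Pt) : Prop :=
  det3 a b x * det3 a b y < 0 ∧ segment ℝ x y ∩ segment ℝ a b = ∅

/-- The set of common edges of the two paths is exactly the segment `ab`. -/
def SharesExactly (a b : Pt) (l₁ l₂ : List Pt) : Prop :=
  IsEdgeOf a b l₁ ∧ IsEdgeOf a b l₂ ∧
  ∀ x y : Pt, IsEdgeOf x y l₁ → IsEdgeOf x y l₂ → ({x, y} : Set Pt) = ({a, b} : Set Pt)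

namespace PfAux

/-- 2D cross product of vectors. -/
def Dv (u v : Pt) : ℝ := u.1 * v.2 - u.2 * v.1
/-- dot product -/
def dot (u v : Pt) : ℝ := u.1 * v.1 + u.2 * v.2

lemma Dv_swap (u v : Pt) : Dv u v = - Dv v u := by simp [Dv]; ring

lemma det3_eq (a b p : Pt) : det3 a b p = Dv (b - a) (p - a) := by
  simp [det3, Dv]

lemma key_id (e x y : Pt) : dot e e * Dv x y = dot e x * Dv e y - Dv e x * dot e y := by
  simp [dot, Dv]; ring

lemma dot_self_pos {e : Pt} (he : e ≠ 0) : 0 < dot e e := by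
  rcases e with ⟨e1, e2⟩
  have h : e1 ≠ 0 ∨ e2 ≠ 0 := by
    by_contra h; push_neg at h; exact he (by simp [Prod.ext_iff, h.1, h.2])
  rcases h with h | h <;>
  · simp only [dot]
    nlinarith [mul_self_pos.mpr h, mul_self_nonneg e1, mul_self_nonneg e2]

lemma Dv_combo (e u w : Pt) (α β : ℝ) : Dv e (α • u + β • w) = α * Dv e u + β * Dv e w := by
  simp [Dv, Prod.smul_fst, Prod.smul_snd, smul_eq_mul]; ring

lemma dot_combo (e u w : Pt) (α β : ℝ) : dot e (α • u + β • w) = α * dot e u + β * dot e w := by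
  simp [dot, Prod.smul_fst, Prod.smul_snd, smul_eq_mul]; ring

lemma Dv_smul (c : ℝ) (e x : Pt) : Dv e (c • x) = c * Dv e x := by
  simp [Dv, Prod.smul_fst, Prod.smul_snd, smul_eq_mul]; ring

lemma dot_smul' (c : ℝ) (e x : Pt) : dot e (c • x) = c * dot e x := by
  simp [dot, Prod.smul_fst, Prod.smul_snd, smul_eq_mul]; ring

lemma Dv_left_smul (c : ℝ) (e x : Pt) : Dv (c • e) x = c * Dv e x := by
  simp [Dv, Prod.smul_fst, Prod.smul_snd, smul_eq_mul]; ring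

/-- parallel: if cross product with nonzero e vanishes, x is a multiple of e. -/
lemma parallel_of_Dv_eq_zero {e x : Pt} (he : e ≠ 0) (h : Dv e x = 0) : ∃ c : ℝ, x = c • e := by
  rcases e with ⟨e1, e2⟩; rcases x with ⟨x1, x2⟩
  simp only [Dv] at h
  have h' : e1 ≠ 0 ∨ e2 ≠ 0 := by
    by_contra hc; push_neg at hc; exact he (by simp [Prod.ext_iff, hc.1, hc.2])
  rcases h' with h1 | h2
  · refine ⟨x1 / e1, ?_⟩
    have : x2 = x1 / e1 * e2 := by field_simp; linarith [h]
    simp [Prod.ext_iff, Prod.smul_fst, Prod.smul_snd, smul_eq_mul]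
    constructor
    · field_simp
    · rw [this]
  · refine ⟨x2 / e2, ?_⟩
    have : x1 = x2 / e2 * e1 := by field_simp; linarith [h]
    simp [Prod.ext_iff, Prod.smul_fst, Prod.smul_snd, smul_eq_mul]
    constructor
    · rw [this]
    · field_simp

/-- squashing function -/
def sig (x : ℝ) : ℝ := x / (1 + |x|)

lemma sig_lt_sig {x y : ℝ} (h : x < y) : sig x < sig y := by
  have hx : 0 < 1 + |x| := by positivity
  have hy : 0 < 1 + |y| := by positivity
  rw [sig, sig, div_lt_div_iff₀ hx hy]
  rcases abs_cases x with ⟨hx1, _⟩ | ⟨hx1, _⟩ <;> rcases abs_cases y with ⟨hy1, _⟩ | ⟨hy1, _⟩ <;>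
    nlinarith

lemma sig_mono_iff {x y : ℝ} : sig x < sig y ↔ x < y := by
  constructor
  · intro h
    by_contra hc; push_neg at hc
    rcases eq_or_lt_of_le hc with rfl | hlt
    · exact lt_irrefl _ h
    · exact absurd h (not_lt.2 (sig_lt_sig hlt).le)
  · exact sig_lt_sig

lemma sig_inj {x y : ℝ} (h : sig x = sig y) : x = y := by
  by_contra hc
  rcases lt_or_gt_of_ne hc with h1 | h1
  · exact absurd h (ne_of_lt (sig_lt_sig h1))
  · exact absurd h.symm (ne_of_lt (sig_lt_sig h1))

lemma sig_abs_lt_one (x : ℝ) : |sig x| < 1 := by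
  have hx : 0 < 1 + |x| := by positivity
  rw [sig, abs_div, abs_of_pos hx, div_lt_one hx]
  linarith

lemma sig_bounds (x : ℝ) : -1 < sig x ∧ sig x < 1 := by
  have := sig_abs_lt_one x
  rw [abs_lt] at this
  exact this

/-- The angular key of vector `x` relative to reference direction `e`.
Strictly increasing in the angle of `x` measured counterclockwise from `e`, in `(0, 2π]`. -/
def Kv (e x : Pt) : ℝ :=
  if 0 < Dv e x then sig (-(dot e x / Dv e x))
  else if Dv e x < 0 then 4 + sig (-(dot e x / Dv e x))
  else if 0 < dot e x then 10 else 2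

lemma Kv_R1 {e x : Pt} (h : 0 < Dv e x) : Kv e x = sig (-(dot e x / Dv e x)) := by
  simp [Kv, h]

lemma Kv_R3 {e x : Pt} (h : Dv e x < 0) : Kv e x = 4 + sig (-(dot e x / Dv e x)) := by
  simp [Kv, h, not_lt.2 h.le, asymm h]

lemma Kv_R4 {e x : Pt} (h : Dv e x = 0) (h2 : 0 < dot e x) : Kv e x = 10 := by
  simp [Kv, h, h2]

lemma Kv_R2 {e x : Pt} (h : Dv e x = 0) (h2 : ¬ 0 < dot e x) : Kv e x = 2 := by
  simp [Kv, h, h2]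

lemma Kv_R1_bounds {e x : Pt} (h : 0 < Dv e x) : -1 < Kv e x ∧ Kv e x < 1 := by
  rw [Kv_R1 h]; exact sig_bounds _

lemma Kv_R3_bounds {e x : Pt} (h : Dv e x < 0) : 3 < Kv e x ∧ Kv e x < 5 := by
  rw [Kv_R3 h]
  have := sig_bounds (-(dot e x / Dv e x))
  constructor <;> linarith [this.1, this.2]

lemma Kv_le_ten (e x : Pt) : Kv e x ≤ 10 := by
  rcases lt_trichotomy (Dv e x) 0 with h | h | h
  · linarith [(Kv_R3_bounds h).2]
  · by_cases h2 : 0 < dot e x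
    · rw [Kv_R4 h h2]
    · rw [Kv_R2 h h2]; norm_num
  · linarith [(Kv_R1_bounds h).2]

/-- Core comparison: within a single halfplane region, the key order is the cross-product order. -/
lemma Kv_lt_iff_core {e x y : Pt} (he : e ≠ 0) (hsame : 0 < Dv e x * Dv e y) :
    (Kv e x < Kv e y ↔ 0 < Dv x y) := by
  have hE : 0 < dot e e := dot_self_pos he
  have hkey := key_id e x y
  have hx0 : Dv e x ≠ 0 := by intro h; rw [h] at hsame; simp at hsame
  have hy0 : Dv e y ≠ 0 := by intro h; rw [h] at hsame; simp at hsame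
  have main : (-(dot e x / Dv e x) < -(dot e y / Dv e y)) ↔ 0 < Dv x y := by
    rw [neg_lt_neg_iff]
    rcases lt_or_gt_of_ne hx0 with hx | hx
    · have hy : Dv e y < 0 := by nlinarith
      rw [← neg_div_neg_eq (dot e y) (Dv e y), ← neg_div_neg_eq (dot e x) (Dv e x),
        div_lt_div_iff₀ (by linarith) (by linarith)]
      constructor <;> intro h <;> nlinarith
    · have hy : 0 < Dv e y := by nlinarith
      rw [div_lt_div_iff₀ hy hx]
      constructor <;> intro h <;> nlinarith
  rcases lt_or_gt_of_ne hx0 with hx | hx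
  · have hy : Dv e y < 0 := by nlinarith
    rw [Kv_R3 hx, Kv_R3 hy, add_lt_add_iff_left, sig_mono_iff]
    exact main
  · have hy : 0 < Dv e y := by nlinarith
    rw [Kv_R1 hx, Kv_R1 hy, sig_mono_iff]
    exact main


/-- Equal keys force parallel vectors. -/
lemma Dv_eq_zero_of_Kv_eq {e x y : Pt} (he : e ≠ 0) (h : Kv e x = Kv e y) : Dv x y = 0 := by
  have hE : 0 < dot e e := dot_self_pos he
  have hkey := key_id e x y
  rcases lt_trichotomy (Dv e x) 0 with hx | hx | hx
  · rcases lt_trichotomy (Dv e y) 0 with hy | hy | hy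
    · rw [Kv_R3 hx, Kv_R3 hy, add_right_inj] at h
      have := sig_inj h
      have h2 : dot e x / Dv e x = dot e y / Dv e y := by linarith
      rw [div_eq_div_iff (ne_of_lt hx) (ne_of_lt hy)] at h2
      nlinarith
    · exfalso
      by_cases h2 : 0 < dot e y
      · rw [Kv_R4 hy h2] at h; linarith [(Kv_R3_bounds hx).2]
      · rw [Kv_R2 hy h2] at h; linarith [(Kv_R3_bounds hx).1]
    · exfalso; rw [Kv_R1 hy] at h
      linarith [(Kv_R3_bounds hx).1, (sig_bounds (-(dot e y / Dv e y))).2]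
  · rcases lt_trichotomy (Dv e y) 0 with hy | hy | hy
    · exfalso
      by_cases h2 : 0 < dot e x
      · rw [Kv_R4 hx h2] at h; linarith [(Kv_R3_bounds hy).2]
      · rw [Kv_R2 hx h2] at h; linarith [(Kv_R3_bounds hy).1]
    · -- both parallel to e
      have h0 : dot e e * Dv x y = 0 := by rw [hkey, hx, hy]; ring
      exact (mul_eq_zero.mp h0).resolve_left (ne_of_gt hE)
    · exfalso
      by_cases h2 : 0 < dot e x
      · rw [Kv_R4 hx h2] at h; linarith [(Kv_R1_bounds hy).2]
      · rw [Kv_R2 hx h2] at h; linarith [(Kv_R1_bounds hy).2]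
  · rcases lt_trichotomy (Dv e y) 0 with hy | hy | hy
    · exfalso; rw [Kv_R1 hx] at h
      linarith [(Kv_R3_bounds hy).1, (sig_bounds (-(dot e x / Dv e x))).2]
    · exfalso
      by_cases h2 : 0 < dot e y
      · rw [Kv_R4 hy h2] at h; linarith [(Kv_R1_bounds hx).2]
      · rw [Kv_R2 hy h2] at h; linarith [(Kv_R1_bounds hx).2]
    · rw [Kv_R1 hx, Kv_R1 hy] at h
      have := sig_inj h
      have h2 : dot e x / Dv e x = dot e y / Dv e y := by linarith
      rw [div_eq_div_iff (ne_of_gt hx) (ne_of_gt hy)] at h2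
      nlinarith

/-- Key is invariant under positive scaling. -/
lemma Kv_smul {c : ℝ} (hc : 0 < c) (e x : Pt) : Kv e (c • x) = Kv e x := by
  have hd := Dv_smul c e x
  have ht := dot_smul' c e x
  rcases lt_trichotomy (Dv e x) 0 with hx | hx | hx
  · have : Dv e (c • x) < 0 := by rw [hd]; exact mul_neg_of_pos_of_neg hc hx
    rw [Kv_R3 this, Kv_R3 hx, hd, ht, mul_div_mul_left _ _ (ne_of_gt hc)]
  · have hd0 : Dv e (c • x) = 0 := by rw [hd, hx, mul_zero]
    by_cases h2 : 0 < dot e x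
    · rw [Kv_R4 hd0 (by rw [ht]; positivity), Kv_R4 hx h2]
    · have : ¬ 0 < dot e (c • x) := by
        rw [ht]; push_neg at h2 ⊢; exact mul_nonpos_of_nonneg_of_nonpos hc.le h2
      rw [Kv_R2 hd0 this, Kv_R2 hx h2]
  · have : 0 < Dv e (c • x) := by rw [hd]; positivity
    rw [Kv_R1 this, Kv_R1 hx, hd, ht, mul_div_mul_left _ _ (ne_of_gt hc)]


lemma Kv_eq_core {e x y : Pt} (he : e ≠ 0) (hsame : 0 < Dv e x * Dv e y) (h : Dv x y = 0) :
    Kv e x = Kv e y := by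
  have hE : 0 < dot e e := dot_self_pos he
  have hkey := key_id e x y
  have hx0 : Dv e x ≠ 0 := by intro h'; rw [h'] at hsame; simp at hsame
  have hy0 : Dv e y ≠ 0 := by intro h'; rw [h'] at hsame; simp at hsame
  have hratio : dot e x / Dv e x = dot e y / Dv e y := by
    rw [div_eq_div_iff hx0 hy0]; nlinarith
  rcases lt_or_gt_of_ne hx0 with hx | hx
  · have hy : Dv e y < 0 := by nlinarith
    rw [Kv_R3 hx, Kv_R3 hy, hratio]
  · have hy : 0 < Dv e y := by nlinarith
    rw [Kv_R1 hx, Kv_R1 hy, hratio]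

lemma Kv_le_core {e x y : Pt} (he : e ≠ 0) (hsame : 0 < Dv e x * Dv e y) (h : 0 ≤ Dv x y) :
    Kv e x ≤ Kv e y := by
  rcases h.eq_or_lt with h | h
  · exact (Kv_eq_core he hsame h.symm).le
  · exact ((Kv_lt_iff_core he hsame).2 h).le

/-- THE cone lemma: a nonnegative combination of `u` and `w` has key between those of
`u` and `w`, provided `u, w` span a positive (counterclockwise, < π) cone and
`Kv e u < Kv e w`. -/
lemma coneK {e u w : Pt} (he : e ≠ 0) (hK : Kv e u < Kv e w) (hD : 0 < Dv u w)
    {α β : ℝ} (hα : 0 ≤ α) (hβ : 0 ≤ β) (hx0 : α • u + β • w ≠ (0 : Pt)) :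
    Kv e u ≤ Kv e (α • u + β • w) ∧ Kv e (α • u + β • w) ≤ Kv e w := by
  have hE : 0 < dot e e := dot_self_pos he
  set x := α • u + β • w with hxdef
  have hdx : Dv e x = α * Dv e u + β * Dv e w := Dv_combo e u w α β
  have htx : dot e x = α * dot e u + β * dot e w := dot_combo e u w α β
  have hDux : Dv u x = β * Dv u w := by
    rw [hxdef, Dv_combo]; have : Dv u u = 0 := by simp [Dv]; ring
    rw [this]; ring
  have hDxw : Dv x w = α * Dv u w := by
    rw [Dv_swap, hxdef, Dv_combo]
    have h1 : Dv w w = 0 := by simp [Dv]; ring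
    have h2 : Dv w u = - Dv u w := by rw [Dv_swap]
    rw [h1, h2]; ring
  rcases hα.eq_or_lt with hα0 | hα0
  · have hβ0 : 0 < β := by
      rcases hβ.eq_or_lt with h | h; · exfalso; apply hx0; rw [hxdef, ← hα0, ← h]; simp
      · exact h
    have : x = β • w := by rw [hxdef, ← hα0]; simp
    rw [this, Kv_smul hβ0]
    exact ⟨hK.le, le_refl _⟩
  rcases hβ.eq_or_lt with hβ0 | hβ0
  · have : x = α • u := by rw [hxdef, ← hβ0]; simp
    rw [this, Kv_smul hα0]
    exact ⟨le_refl _, hK.le⟩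
  -- main case : α > 0, β > 0
  rcases lt_trichotomy (Dv e u) 0 with hu | hu | hu
  · -- u in R3
    rcases lt_trichotomy (Dv e w) 0 with hw | hw | hw
    · -- both R3
      have hx' : Dv e x < 0 := by
        rw [hdx]
        have h1 := mul_neg_of_pos_of_neg hα0 hu
        have h2 := mul_neg_of_pos_of_neg hβ0 hw
        linarith
      constructor
      · exact Kv_le_core he (mul_pos_of_neg_of_neg hu hx') (by rw [hDux]; positivity)
      · exact Kv_le_core he (mul_pos_of_neg_of_neg hx' hw) (by rw [hDxw]; positivity)
    · -- w parallel to e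
      obtain ⟨c, hc⟩ := parallel_of_Dv_eq_zero he hw
      have hDuw : Dv u w = - (c * Dv e u) := by
        rw [hc, Dv_smul, Dv_swap]; ring
      have hcpos : 0 < c := by nlinarith
      have htw : 0 < dot e w := by rw [hc, dot_smul']; positivity
      have hx' : Dv e x < 0 := by
        rw [hdx, hw]
        have h1 := mul_neg_of_pos_of_neg hα0 hu
        linarith
      constructor
      · exact Kv_le_core he (mul_pos_of_neg_of_neg hu hx') (by rw [hDux]; positivity)
      · rw [Kv_R4 hw htw]; exact le_trans (Kv_R3_bounds hx').2.le (by norm_num)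
    · -- w in R1 : contradiction with hK
      exfalso
      linarith [(Kv_R3_bounds hu).1, (Kv_R1_bounds hw).2]
  · -- u parallel to e
    obtain ⟨c, hc⟩ := parallel_of_Dv_eq_zero he hu
    have hDuw : Dv u w = c * Dv e w := by rw [hc, Dv_left_smul]
    have hc0 : c ≠ 0 := by intro h; rw [h] at hDuw; simp at hDuw; linarith
    by_cases htu : 0 < dot e u
    · exfalso
      rw [Kv_R4 hu htu] at hK
      linarith [Kv_le_ten e w]
    · have hcneg : c < 0 := by
        rcases lt_or_gt_of_ne hc0 with h | h; · exact h
        · exfalso; apply htu; rw [hc, dot_smul']; positivity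
      have hw : Dv e w < 0 := by nlinarith
      have hx' : Dv e x < 0 := by
        rw [hdx, hu]
        have h2 := mul_neg_of_pos_of_neg hβ0 hw
        linarith
      constructor
      · rw [Kv_R2 hu htu]; linarith [(Kv_R3_bounds hx').1]
      · exact Kv_le_core he (mul_pos_of_neg_of_neg hx' hw) (by rw [hDxw]; positivity)
  · -- u in R1
    rcases lt_trichotomy (Dv e w) 0 with hw | hw | hw
    · -- w in R3
      rcases lt_trichotomy (Dv e x) 0 with hx' | hx' | hx'
      · constructor
        · linarith [(Kv_R1_bounds hu).2, (Kv_R3_bounds hx').1]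
        · exact Kv_le_core he (mul_pos_of_neg_of_neg hx' hw) (by rw [hDxw]; positivity)
      · obtain ⟨c, hc⟩ := parallel_of_Dv_eq_zero he hx'
        have hDux' : Dv u x = - (c * Dv e u) := by rw [hc, Dv_smul, Dv_swap]; ring
        have hcneg : c < 0 := by nlinarith [hDux, mul_pos hβ0 hD]
        have htx' : ¬ 0 < dot e x := by
          rw [hc, dot_smul']; push_neg; nlinarith
        rw [Kv_R2 hx' htx']
        constructor
        · linarith [(Kv_R1_bounds hu).2]
        · linarith [(Kv_R3_bounds hw).1]
      · constructor
        · exact Kv_le_core he (mul_pos hu hx') (by rw [hDux]; positivity)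
        · linarith [(Kv_R1_bounds hx').2, (Kv_R3_bounds hw).1]
    · -- w parallel to e
      obtain ⟨c, hc⟩ := parallel_of_Dv_eq_zero he hw
      have hDuw : Dv u w = - (c * Dv e u) := by rw [hc, Dv_smul, Dv_swap]; ring
      have hcneg : c < 0 := by nlinarith
      have htw : ¬ 0 < dot e w := by rw [hc, dot_smul']; push_neg; nlinarith
      have hx' : 0 < Dv e x := by
        rw [hdx, hw]
        have h1 := mul_pos hα0 hu
        linarith
      constructor
      · exact Kv_le_core he (mul_pos hu hx') (by rw [hDux]; positivity)
      · rw [Kv_R2 hw htw]; linarith [(Kv_R1_bounds hx').2]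
    · -- both R1
      have hx' : 0 < Dv e x := by
        rw [hdx]
        have h1 := mul_pos hα0 hu
        have h2 := mul_pos hβ0 hw
        linarith
      constructor
      · exact Kv_le_core he (mul_pos hu hx') (by rw [hDux]; positivity)
      · exact Kv_le_core he (mul_pos hx' hw) (by rw [hDxw]; positivity)

/-- Reference-flip: if `x` comes before `y` in the circular order around reference `e`,
then `e` comes before `x` in the circular order around reference `y`. -/
lemma flipK {e x y : Pt} (he : e ≠ 0) (hy : y ≠ 0)
    (hex : Dv e x ≠ 0) (hey : Dv e y ≠ 0) (hxy : Dv x y ≠ 0)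
    (h : Kv e x < Kv e y) : Kv y e < Kv y x := by
  have hye : Dv y e = - Dv e y := by rw [Dv_swap]
  have hyx : Dv y x = - Dv x y := by rw [Dv_swap]
  rcases lt_or_gt_of_ne hex with h1 | h1
  · rcases lt_or_gt_of_ne hey with h2 | h2
    · -- both R3 : h iff 0 < Dv x y
      have h3 : 0 < Dv x y := (Kv_lt_iff_core he (by nlinarith)).1 h
      have : Dv y e > 0 := by rw [hye]; linarith
      have : Dv y x < 0 := by rw [hyx]; linarith
      linarith [(Kv_R1_bounds (show 0 < Dv y e by rw [hye]; linarith)).2,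
        (Kv_R3_bounds (show Dv y x < 0 by rw [hyx]; linarith)).1]
    · exfalso
      linarith [(Kv_R3_bounds h1).1, (Kv_R1_bounds h2).2]
  · rcases lt_or_gt_of_ne hey with h2 | h2
    · -- e before π-cross: x R1, y R3
      rcases lt_or_gt_of_ne hxy with h3 | h3
      · have hye' : 0 < Dv y e := by rw [hye]; linarith
        have hyx' : 0 < Dv y x := by rw [hyx]; linarith
        exact (Kv_lt_iff_core hy (by nlinarith)).2 h1
      · linarith [(Kv_R1_bounds (show 0 < Dv y e by rw [hye]; linarith)).2,
          (Kv_R3_bounds (show Dv y x < 0 by rw [hyx]; linarith)).1]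
    · -- both R1
      have h3 : 0 < Dv x y := (Kv_lt_iff_core he (by nlinarith)).1 h
      have hye' : Dv y e < 0 := by rw [hye]; linarith
      have hyx' : Dv y x < 0 := by rw [hyx]; linarith
      exact (Kv_lt_iff_core hy (by nlinarith)).2 h1


/-! ### Collinearity and segments -/

lemma collinear_of_det3 {p q r : Pt} (h : det3 p q r = 0) :
    Collinear ℝ ({p, q, r} : Set Pt) := by
  rw [det3_eq] at h
  by_cases hqp : q - p = 0
  · have hqp' : q = p := by rwa [sub_eq_zero] at hqp
    apply (collinear_iff_of_mem (Set.mem_insert p {q, r})).2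
    refine ⟨r - p, ?_⟩
    intro x hx
    rcases hx with rfl | rfl | rfl
    · exact ⟨0, by simp⟩
    · exact ⟨0, by simp [hqp']⟩
    · exact ⟨1, by simp⟩
  · obtain ⟨c, hc⟩ := parallel_of_Dv_eq_zero hqp h
    apply (collinear_iff_of_mem (Set.mem_insert p {q, r})).2
    refine ⟨q - p, ?_⟩
    intro x hx
    rcases hx with rfl | rfl | rfl
    · exact ⟨0, by simp⟩
    · exact ⟨1, by simp⟩
    · exact ⟨c, by rw [← hc]; simp⟩

lemma gp_det {S : Finset Pt} (hgp : GenPos S) {p q r : Pt} (hp : p ∈ S) (hq : q ∈ S)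
    (hr : r ∈ S) (hpq : p ≠ q) (hpr : p ≠ r) (hqr : q ≠ r) : det3 p q r ≠ 0 :=
  fun h => hgp p hp q hq r hr hpq hpr hqr (collinear_of_det3 h)

lemma seg_combo {p q x : Pt} (h : x ∈ segment ℝ p q) :
    ∃ α β : ℝ, 0 ≤ α ∧ 0 ≤ β ∧ α + β = 1 ∧ x = α • p + β • q := by
  obtain ⟨a, b, ha, hb, hab, hx⟩ := h
  exact ⟨a, b, ha, hb, hab, hx.symm⟩

lemma det3_combo {A B p q : Pt} {α β : ℝ} (hab : α + β = 1) :
    det3 A B (α • p + β • q) = α * det3 A B p + β * det3 A B q := by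
  have hβ : β = 1 - α := by linarith
  subst hβ
  simp only [det3, Prod.smul_fst, Prod.smul_snd, smul_eq_mul, Prod.fst_add, Prod.snd_add]
  ring

lemma det3_self_left (A B : Pt) : det3 A B A = 0 := by simp [det3]

lemma det3_self_right (A B : Pt) : det3 A B B = 0 := by simp only [det3]; ring

lemma det3_seg_zero {p q x : Pt} (h : x ∈ segment ℝ p q) : det3 p q x = 0 := by
  obtain ⟨α, β, hα, hβ, hab, hx⟩ := seg_combo h
  rw [hx, det3_combo hab, det3_self_left, det3_self_right]; ring

lemma det3_swap12 (a b p : Pt) : det3 b a p = - det3 a b p := by simp [det3]; ring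

/-- Vector from s to a segment point is the corresponding combination of endpoint vectors. -/
lemma seg_vec_combo {p q x s : Pt} {α β : ℝ} (hab : α + β = 1)
    (hx : x = α • p + β • q) : x - s = α • (p - s) + β • (q - s) := by
  have hβ : β = 1 - α := by linarith
  subst hβ
  rcases p with ⟨p1, p2⟩; rcases q with ⟨q1, q2⟩; rcases s with ⟨s1, s2⟩
  rw [hx]
  simp [Prod.ext_iff, Prod.smul_fst, Prod.smul_snd, smul_eq_mul, Prod.fst_add, Prod.snd_add,
    Prod.fst_sub, Prod.snd_sub]
  constructor <;> ring

/-! ### edge list lemmas -/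

lemma mem_edgeList {l : List Pt} {x y : Pt} :
    (x, y) ∈ edgeList l ↔ ∃ i, ∃ h : i + 1 < l.length,
      l[i]'(by omega) = x ∧ l[i+1]'h = y := by
  unfold edgeList
  rw [List.mem_iff_getElem]
  constructor
  · rintro ⟨i, h, hget⟩
    have hlen : (l.zip l.tail).length = l.length ⊓ l.tail.length := List.length_zip
    have hlt : l.tail.length = l.length - 1 := List.length_tail
    have hi1 : i + 1 < l.length := by omega
    refine ⟨i, hi1, ?_, ?_⟩
    · have := List.getElem_zip (l := l) (l' := l.tail) (i := i) (h := h)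
      rw [this] at hget
      exact congrArg Prod.fst hget
    · have := List.getElem_zip (l := l) (l' := l.tail) (i := i) (h := h)
      rw [this] at hget
      have h2 := congrArg Prod.snd hget
      simp only at h2
      rw [← h2, List.getElem_tail]
  · rintro ⟨i, h, hx, hy⟩
    have hlt : l.tail.length = l.length - 1 := List.length_tail
    have hzl : (l.zip l.tail).length = l.length ⊓ l.tail.length := List.length_zip
    have hilen : i < (l.zip l.tail).length := by omega
    refine ⟨i, hilen, ?_⟩
    rw [List.getElem_zip, List.getElem_tail]
    exact Prod.ext (by simpa using hx) (by simpa using hy)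

lemma edgeList_mem_mem {l : List Pt} {x y : Pt} (h : (x, y) ∈ edgeList l) :
    x ∈ l ∧ y ∈ l := by
  unfold edgeList at h
  exact ⟨(List.of_mem_zip h).1, List.mem_of_mem_tail (List.of_mem_zip h).2⟩


/-! ### Convex hull balance lemma -/

lemma Dv_zero_right (u : Pt) : Dv u 0 = 0 := by simp [Dv]

lemma Dv_neg_left (u v : Pt) : Dv (-u) v = - Dv u v := by
  simp [Dv]; ring

lemma pluecker (a b c d : Pt) : Dv a b * Dv c d - Dv a c * Dv b d + Dv a d * Dv b c = 0 := by
  simp only [Dv]; ring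

/-- If `s` is in the convex hull of `T`, not in `T`, and all of `T` lies weakly
on one side of the line through `s` with direction `u`, with at most one point on the line,
we get a contradiction. -/
lemma hullcon {T : Finset Pt} {s u : Pt} (hs : s ∈ convexHull ℝ (T : Set Pt)) (hsT : s ∉ T)
    (hle : ∀ w ∈ T, Dv u (w - s) ≤ 0)
    (huniq : ∀ w ∈ T, ∀ w' ∈ T, Dv u (w - s) = 0 → Dv u (w' - s) = 0 → w = w') : False := by
  rw [Finset.convexHull_eq] at hs
  obtain ⟨wt, hw0, hw1, hcm⟩ := hs
  rw [Finset.centerMass, hw1, inv_one, one_smul] at hcm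
  have hfst : (∑ w ∈ T, wt w • id w).1 = ∑ w ∈ T, wt w * w.1 := by
    rw [Prod.fst_sum]; apply Finset.sum_congr rfl; intro w _; simp [smul_eq_mul]
  have hsnd : (∑ w ∈ T, wt w • id w).2 = ∑ w ∈ T, wt w * w.2 := by
    rw [Prod.snd_sum]; apply Finset.sum_congr rfl; intro w _; simp [smul_eq_mul]
  have hs1 : ∑ w ∈ T, wt w * w.1 = s.1 := by rw [← hfst, hcm]
  have hs2 : ∑ w ∈ T, wt w * w.2 = s.2 := by rw [← hsnd, hcm]
  have hsum : ∑ w ∈ T, wt w * Dv u (w - s) = 0 := by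
    have hterm : ∀ w ∈ T, wt w * Dv u (w - s) =
        u.1 * (wt w * w.2) - u.2 * (wt w * w.1) - wt w * (u.1 * s.2 - u.2 * s.1) := by
      intro w _; simp only [Dv, Prod.fst_sub, Prod.snd_sub]; ring
    rw [Finset.sum_congr rfl hterm]
    rw [Finset.sum_sub_distrib, Finset.sum_sub_distrib, ← Finset.mul_sum, ← Finset.mul_sum,
      ← Finset.sum_mul, hs1, hs2, hw1]
    ring
  have hzero : ∀ w ∈ T, wt w * Dv u (w - s) = 0 := by
    intro w hw
    have := (Finset.sum_eq_zero_iff_of_nonpos (fun w hw =>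
      mul_nonpos_of_nonneg_of_nonpos (hw0 w hw) (hle w hw))).1 hsum
    exact this w hw
  have hex : ∃ w₀ ∈ T, wt w₀ ≠ 0 := by
    by_contra hc; push_neg at hc
    rw [Finset.sum_eq_zero hc] at hw1; norm_num at hw1
  obtain ⟨w₀, hw₀T, hw₀⟩ := hex
  have hD₀ : Dv u (w₀ - s) = 0 := by
    rcases mul_eq_zero.1 (hzero w₀ hw₀T) with h | h
    · exact absurd h hw₀
    · exact h
  have hother : ∀ w ∈ T, w ≠ w₀ → wt w = 0 := by
    intro w hw hne
    by_contra hc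
    rcases mul_eq_zero.1 (hzero w hw) with h | h
    · exact hc h
    · exact hne (huniq w hw w₀ hw₀T h hD₀)
  have hwt1 : wt w₀ = 1 := by
    rw [← hw1, Finset.sum_eq_single w₀ (fun w hw hne => hother w hw hne) (fun h => absurd hw₀T h)]
  have hsw : s = w₀ := by
    have : ∑ w ∈ T, wt w • id w = wt w₀ • w₀ := by
      apply Finset.sum_eq_single w₀
      · intro w hw hne; rw [hother w hw hne, zero_smul]
      · intro h; exact absurd hw₀T h
    rw [this, hwt1, one_smul] at hcm
    exact hcm.symm
  exact hsT (hsw ▸ hw₀T)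

/-- A point strictly separated from a finite set by a line is not in its convex hull. -/
lemma not_mem_hull_of_halfplane {T : Finset Pt} {c z : Pt}
    (h : ∀ w ∈ T, 0 < Dv c (w - z)) : z ∉ convexHull ℝ (T : Set Pt) := by
  intro hz
  have hzT : z ∉ T := by
    intro hzT
    have := h z hzT
    rw [sub_self, Dv_zero_right] at this
    exact lt_irrefl _ this
  exact hullcon hz hzT (fun w hw => by rw [Dv_neg_left]; linarith [h w hw])
    (fun w hw w' hw' h1 _ => by
      rw [Dv_neg_left, neg_eq_zero] at h1
      exact absurd h1 (ne_of_gt (h w hw)))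

/-! ### Maximum of a finite set under a (locally) total transitive relation -/

lemma finmax (r : Pt → Pt → Prop) :
    ∀ (F : Finset Pt), F.Nonempty →
    (∀ p ∈ F, ∀ q ∈ F, p ≠ q → r p q ∨ r q p) →
    (∀ p ∈ F, ∀ q ∈ F, ∀ w ∈ F, r p q → r q w → r p w) →
    ∃ m ∈ F, ∀ w ∈ F, w ≠ m → r w m := by
  intro F
  induction F using Finset.induction_on with
  | empty => intro h; exact absurd h (by simp)
  | @insert a F haF ih =>
    intro _ htot htrans
    rcases F.eq_empty_or_nonempty with rfl | hne
    · exact ⟨a, by simp, by simp⟩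
    · obtain ⟨m, hmF, hm⟩ := ih hne
        (fun p hp q hq => htot p (Finset.mem_insert_of_mem hp) q (Finset.mem_insert_of_mem hq))
        (fun p hp q hq w hw => htrans p (Finset.mem_insert_of_mem hp) q
          (Finset.mem_insert_of_mem hq) w (Finset.mem_insert_of_mem hw))
      have ham : a ≠ m := by rintro rfl; exact haF hmF
      rcases htot a (Finset.mem_insert_self a F) m (Finset.mem_insert_of_mem hmF) ham with h | h
      · -- r a m : m still max
        refine ⟨m, Finset.mem_insert_of_mem hmF, ?_⟩
        intro w hw hwm
        rcases Finset.mem_insert.1 hw with rfl | hwF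
        · exact h
        · exact hm w hwF hwm
      · -- r m a : a is the new max
        refine ⟨a, Finset.mem_insert_self a F, ?_⟩
        intro w hw hwa
        rcases Finset.mem_insert.1 hw with rfl | hwF
        · exact absurd rfl hwa
        · by_cases hwm : w = m
          · exact hwm ▸ h
          · exact htrans w (Finset.mem_insert_of_mem hwF) m (Finset.mem_insert_of_mem hmF)
              a (Finset.mem_insert_self a F) (hm w hwF hwm) h


/-! ### Extreme directions around a point outside the hull of the rest -/

lemma extremes {S : Finset Pt} (hgp : GenPos S) {t : Pt} (ht : t ∈ S)
    (hext : t ∉ convexHull ℝ ((S.erase t : Finset Pt) : Set Pt))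
    (hcard : 2 ≤ (S.erase t).card) :
    ∃ u₁ ∈ S.erase t, ∃ u₂ ∈ S.erase t, u₁ ≠ u₂ ∧
      (∀ w ∈ S.erase t, w ≠ u₁ → Dv (u₁ - t) (w - t) < 0) ∧
      (∀ w ∈ S.erase t, w ≠ u₂ → 0 < Dv (u₂ - t) (w - t)) := by
  set T := S.erase t with hT
  -- separate t from the hull of T
  have hconv : Convex ℝ (convexHull ℝ (T : Set Pt)) := convex_convexHull ℝ _
  have hclosed : IsClosed (convexHull ℝ (T : Set Pt)) :=
    (T.finite_toSet.isCompact_convexHull (𝕜 := ℝ)).isClosed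
  obtain ⟨f, c, hft, hfw⟩ := geometric_hahn_banach_point_closed hconv hclosed hext
  set n : Pt := (f (1, 0), f (0, 1)) with hn
  have hflin : ∀ y : Pt, f y = n.1 * y.1 + n.2 * y.2 := by
    intro y
    have : y = y.1 • ((1 : ℝ), (0 : ℝ)) + y.2 • ((0 : ℝ), (1 : ℝ)) := by
      rcases y with ⟨y1, y2⟩
      simp [Prod.ext_iff, Prod.smul_fst, Prod.smul_snd, smul_eq_mul]
    calc f y = f (y.1 • ((1 : ℝ), (0 : ℝ)) + y.2 • ((0 : ℝ), (1 : ℝ))) := by rw [← this]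
    _ = y.1 * f (1, 0) + y.2 * f (0, 1) := by
        rw [map_add, map_smul, map_smul]; simp [smul_eq_mul]
    _ = n.1 * y.1 + n.2 * y.2 := by rw [hn]; ring
  set m : Pt := (n.2, -n.1) with hm
  have hpos : ∀ w ∈ T, 0 < Dv m (w - t) := by
    intro w hw
    have h1 : c < f w := hfw w (subset_convexHull ℝ _ (by exact_mod_cast hw))
    have h2 : f (w - t) = f w - f t := map_sub f w t
    have : 0 < f (w - t) := by rw [h2]; linarith
    rw [hflin] at this
    simp only [Dv, hm, Prod.fst_sub, Prod.snd_sub] at *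
    linarith
  have hdet : ∀ p ∈ T, ∀ q ∈ T, p ≠ q → Dv (p - t) (q - t) ≠ 0 := by
    intro p hp q hq hpq
    have hp' := Finset.mem_erase.1 hp
    have hq' := Finset.mem_erase.1 hq
    have := gp_det hgp ht (Finset.mem_of_mem_erase hp) (Finset.mem_of_mem_erase hq)
      (Ne.symm hp'.1) (Ne.symm hq'.1) hpq
    rwa [det3_eq] at this
  have htrans : ∀ p ∈ T, ∀ q ∈ T, ∀ w ∈ T,
      0 < Dv (p - t) (q - t) → 0 < Dv (q - t) (w - t) → 0 < Dv (p - t) (w - t) := by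
    intro p hp q hq w hw h1 h2
    have hpl := pluecker m (p - t) (q - t) (w - t)
    have h3 := hpos p hp
    have h4 := hpos q hq
    have h5 := hpos w hw
    nlinarith
  have hne : T.Nonempty := Finset.card_pos.1 (by omega)
  -- maximum gives u₁
  obtain ⟨u₁, hu₁T, hu₁⟩ := finmax (fun p q => 0 < Dv (p - t) (q - t)) T hne
    (fun p hp q hq hpq => by
      rcases lt_or_gt_of_ne (hdet p hp q hq hpq) with h | h
      · right; rw [Dv_swap] at h; linarith
      · left; exact h)
    htrans
  -- minimum gives u₂
  obtain ⟨u₂, hu₂T, hu₂⟩ := finmax (fun p q => 0 < Dv (q - t) (p - t)) T hne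
    (fun p hp q hq hpq => by
      rcases lt_or_gt_of_ne (hdet p hp q hq hpq) with h | h
      · left; rw [Dv_swap] at h; linarith
      · right; exact h)
    (fun p hp q hq w hw h1 h2 => htrans w hw q hq p hp h2 h1)
  have hu₁max : ∀ w ∈ T, w ≠ u₁ → Dv (u₁ - t) (w - t) < 0 := by
    intro w hw hwu
    have := hu₁ w hw hwu
    rw [Dv_swap] at this; linarith
  have hu₂min : ∀ w ∈ T, w ≠ u₂ → 0 < Dv (u₂ - t) (w - t) := fun w hw hwu => hu₂ w hw hwu
  have hne12 : u₁ ≠ u₂ := by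
    intro h
    obtain ⟨w, hwT, hw⟩ := Finset.exists_mem_ne (show 1 < T.card by omega) u₁
    have h1 := hu₁max w hwT hw
    have h2 := hu₂min w hwT (h ▸ hw)
    rw [← h] at h2; linarith
  exact ⟨u₁, hu₁T, u₂, hu₂T, hne12, hu₁max, hu₂min⟩


/-! ### More edge-list lemmas -/

lemma edge_ne {l : List Pt} (hnd : l.Nodup) {p q : Pt} (h : (p, q) ∈ edgeList l) : p ≠ q := by
  obtain ⟨i, hi, hp, hq⟩ := mem_edgeList.1 h
  intro hpq
  have : l[i]'(by omega) = l[i+1]'hi := by rw [hp, hq, hpq]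
  have := (List.Nodup.getElem_inj_iff hnd).1 this
  omega

lemma edgeList_append_singleton {l : List Pt} (h : l ≠ []) (t : Pt) :
    edgeList (l ++ [t]) = edgeList l ++ [(l.getLast h, t)] := by
  induction l with
  | nil => exact absurd rfl h
  | cons a l ih =>
    cases l with
    | nil => simp [edgeList]
    | cons b m =>
      have h2 : (b :: m : List Pt) ≠ [] := by simp
      have : edgeList ((a :: b :: m) ++ [t]) = (a, b) :: edgeList ((b :: m) ++ [t]) := by
        simp [edgeList]
      rw [this, ih h2]
      have : edgeList (a :: b :: m) = (a, b) :: edgeList (b :: m) := by simp [edgeList]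
      rw [this]
      simp [List.getLast]

lemma mem_edgeList_reverse {l : List Pt} {x y : Pt} :
    (x, y) ∈ edgeList l.reverse ↔ (y, x) ∈ edgeList l := by
  rw [mem_edgeList, mem_edgeList]
  constructor
  · rintro ⟨i, hi, hx, hy⟩
    rw [List.length_reverse] at hi
    refine ⟨l.length - i - 2, by omega, ?_, ?_⟩
    · rw [← hy, List.getElem_reverse]
      congr 1; omega
    · rw [← hx, List.getElem_reverse]
      congr 1; omega
  · rintro ⟨i, hi, hy, hx⟩
    refine ⟨l.length - i - 2, by rw [List.length_reverse]; omega, ?_, ?_⟩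
    · rw [← hx, List.getElem_reverse]
      congr 1; omega
    · rw [← hy, List.getElem_reverse]
      congr 1; omega

lemma isEdgeOf_reverse {l : List Pt} {a b : Pt} :
    IsEdgeOf a b l.reverse ↔ IsEdgeOf a b l := by
  unfold IsEdgeOf
  rw [mem_edgeList_reverse, mem_edgeList_reverse]
  exact or_comm

lemma planePath_reverse {S : Finset Pt} {l : List Pt} (h : PlanePath S l) :
    PlanePath S l.reverse := by
  obtain ⟨hnd, hfin, hpl⟩ := h
  refine ⟨by simpa using hnd, by simpa using hfin, ?_⟩
  rintro ⟨x1, x2⟩ he ⟨y1, y2⟩ hf hef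
  have he' : (x2, x1) ∈ edgeList l := mem_edgeList_reverse.1 he
  have hf' : (y2, y1) ∈ edgeList l := mem_edgeList_reverse.1 hf
  have hef' : ((x2, x1) : Pt × Pt) ≠ (y2, y1) := by
    intro hcon
    apply hef
    simp only [Prod.mk.injEq] at hcon ⊢
    exact ⟨hcon.2, hcon.1⟩
  have := hpl (x2, x1) he' (y2, y1) hf' hef'
  simp only at this ⊢
  rw [segment_symm, segment_symm ℝ y1 y2]
  intro z hz
  have := this hz
  constructor
  · have := this.1; rw [Set.pair_comm]; exact this
  · have := this.2; rw [Set.pair_comm]; exact this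

/-- Two segments sharing the endpoint `q`, not collinear, meet only at `q`. -/
lemma seg_inter_shared {p q r : Pt} (h : det3 p q r ≠ 0) :
    segment ℝ p q ∩ segment ℝ q r ⊆ ({q} : Set Pt) := by
  rintro x ⟨hx1, hx2⟩
  have hz : det3 p q x = 0 := det3_seg_zero hx1
  obtain ⟨α, β, hα, hβ, hab, hx⟩ := seg_combo hx2
  rw [hx, det3_combo hab, det3_self_right] at hz
  have hβ0 : β = 0 := by
    rcases mul_eq_zero.1 (by linarith : β * det3 p q r = 0) with h' | h'
    · exact h'
    · exact absurd h' h
  have hα1 : α = 1 := by linarith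
  rw [hx, hβ0, hα1]
  simp

/-- Appending a far-side point `t` along a hull edge `u t` preserves planarity. -/
lemma planePath_append {S' : Finset Pt} {P : List Pt} {u t : Pt} {σ : ℝ}
    (hP : PlanePath S' P) (hne : P ≠ []) (hu : P.getLast hne = u)
    (ht : t ∉ S') (hσ : σ ≠ 0)
    (hside : ∀ w ∈ S', w ≠ u → 0 < σ * det3 u t w) :
    PlanePath (insert t S') (P ++ [t]) := by
  obtain ⟨hnd, hfin, hpl⟩ := hP
  have htP : t ∉ P := fun hc => ht (hfin ▸ List.mem_toFinset.2 hc)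
  have hmem : ∀ {x : Pt}, x ∈ P → x ∈ S' := fun hx => hfin ▸ List.mem_toFinset.2 hx
  refine ⟨?_, ?_, ?_⟩
  · rw [List.nodup_append]
    exact ⟨hnd, List.nodup_singleton t, fun x hx y hy hxy => htP (by rw [List.mem_singleton] at hy; rw [← hy, ← hxy]; exact hx)⟩
  · rw [List.toFinset_append, hfin]
    rw [Finset.union_comm]
    ext x; simp
  · have key : ∀ p q : Pt, (p, q) ∈ edgeList P →
        segment ℝ p q ∩ segment ℝ u t ⊆ (({p, q} : Set Pt) ∩ ({u, t} : Set Pt)) := by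
      intro p q hpq
      have hpq' := edgeList_mem_mem hpq
      have hpS : p ∈ S' := hmem hpq'.1
      have hqS : q ∈ S' := hmem hpq'.2
      have hpqne : p ≠ q := edge_ne hnd hpq
      rintro x ⟨hx1, hx2⟩
      have hz : det3 u t x = 0 := by
        have h1 := det3_seg_zero hx2
        obtain ⟨α, β, hα, hβ, hab, hx⟩ := seg_combo hx2
        rw [hx, det3_combo hab, det3_self_left, det3_self_right]; ring
      obtain ⟨α, β, hα, hβ, hab, hx⟩ := seg_combo hx1
      have hcombo : det3 u t x = α * det3 u t p + β * det3 u t q := by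
        rw [hx, det3_combo hab]
      by_cases hpu : p = u
      · -- x = α u + β q ; det3 u t x = β det3 u t q = 0 ⇒ β = 0 ⇒ x = u
        have hqu : q ≠ u := fun h => hpqne (hpu.trans h.symm)
        have hq' : 0 < σ * det3 u t q := hside q hqS hqu
        have : β * det3 u t q = 0 := by
          rw [hcombo, hpu, det3_self_left] at hz; linarith
        have hβ0 : β = 0 := by
          rcases mul_eq_zero.1 this with h' | h'
          · exact h'
          · exfalso; rw [h'] at hq'; simp at hq'
        have hxu : x = u := by rw [hx, hβ0, hpu, (by linarith : α = (1:ℝ))]; simp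
        constructor
        · rw [hxu, hpu]; left; rfl
        · rw [hxu]; left; rfl
      by_cases hqu : q = u
      · have hp' : 0 < σ * det3 u t p := hside p hpS hpu
        have : α * det3 u t p = 0 := by
          rw [hcombo, hqu, det3_self_left] at hz; linarith
        have hα0 : α = 0 := by
          rcases mul_eq_zero.1 this with h' | h'
          · exact h'
          · exfalso; rw [h'] at hp'; simp at hp'
        have hxu : x = u := by rw [hx, hα0, hqu, (by linarith : β = (1:ℝ))]; simp
        constructor
        · rw [hxu, hqu]; right; rfl
        · rw [hxu]; left; rfl
      · exfalso
        have hp' : 0 < σ * det3 u t p := hside p hpS hpu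
        have hq' : 0 < σ * det3 u t q := hside q hqS hqu
        have : 0 < σ * det3 u t x := by
          rw [hcombo]
          rcases le_total (σ * det3 u t p) (σ * det3 u t q) with hle | hle
          · nlinarith [mul_le_mul_of_nonneg_left hle hβ, mul_nonneg hα hp'.le]
          · nlinarith [mul_le_mul_of_nonneg_left hle hα, mul_nonneg hβ hq'.le]
        rw [hz, mul_zero] at this
        exact lt_irrefl _ this
    rw [edgeList_append_singleton hne t, hu]
    rintro e he f hf hef
    rcases List.mem_append.1 he with he' | he' <;> rcases List.mem_append.1 hf with hf' | hf'
    · exact hpl e he' f hf' hef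
    · have hf2 : f = (u, t) := by simpa using hf'
      rcases e with ⟨p, q⟩
      rw [hf2]
      exact key p q he'
    · have he2 : e = (u, t) := by simpa using he'
      rcases f with ⟨p, q⟩
      rw [he2]
      intro x hx
      have := key p q hf' ⟨hx.2, hx.1⟩
      exact ⟨this.2, this.1⟩
    · exfalso
      have he2 : e = (u, t) := by simpa using he'
      have hf2 : f = (u, t) := by simpa using hf'
      exact hef (he2.trans hf2.symm)


/-! ### Paths to an extreme point -/

lemma planePath_pair {s t : Pt} (h : s ≠ t) : PlanePath {s, t} [s, t] := by
  refine ⟨by simp [h], by simp, ?_⟩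
  intro e he f hf hef
  have : edgeList [s, t] = [(s, t)] := by simp [edgeList]
  rw [this] at he hf
  simp at he hf
  exact absurd (he.trans hf.symm) hef

lemma planePath_triple {x w y : Pt} (hxw : x ≠ w) (hxy : x ≠ y) (hwy : w ≠ y)
    (hdet : det3 x w y ≠ 0) : PlanePath {x, w, y} [x, w, y] := by
  refine ⟨by simp [hxw, hxy, hwy], by simp, ?_⟩
  have hel : edgeList [x, w, y] = [(x, w), (w, y)] := by simp [edgeList]
  intro e he f hf hef
  rw [hel] at he hf
  simp only [List.mem_cons, List.mem_singleton, List.not_mem_nil, or_false] at he hf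
  have hsub := seg_inter_shared hdet
  rcases he with rfl | rfl <;> rcases hf with rfl | rfl
  · exact absurd rfl hef
  · intro z hz
    have := hsub hz
    simp only [Set.mem_singleton_iff] at this
    subst this
    constructor
    · right; rfl
    · left; rfl
  · intro z hz
    have := hsub ⟨hz.2, hz.1⟩
    simp only [Set.mem_singleton_iff] at this
    subst this
    constructor
    · left; rfl
    · right; rfl
  · exact absurd rfl hef

lemma pathToExtreme : ∀ n : ℕ, ∀ S : Finset Pt, S.card = n → GenPos S → ∀ t ∈ S,
    t ∉ convexHull ℝ ((S.erase t : Finset Pt) : Set Pt) → ∀ s ∈ S, s ≠ t →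
    ∃ l : List Pt, PlanePath S l ∧ l.head? = some s ∧ l.getLast? = some t := by
  intro n
  induction n using Nat.strong_induction_on with
  | _ n ih =>
    intro S hcard hgp t ht hext s hs hst
    have hcard2 : 2 ≤ S.card := Finset.one_lt_card.2 ⟨s, hs, t, ht, hst⟩
    by_cases hc2 : S.card = 2
    · -- base case : S = {s, t}
      have hS : S = {s, t} := by
        have hsub : ({s, t} : Finset Pt) ⊆ S := by
          intro x hx
          rcases Finset.mem_insert.1 hx with rfl | hx
          · exact hs
          · rw [Finset.mem_singleton] at hx; exact hx ▸ ht
        refine (Finset.eq_of_subset_of_card_le hsub ?_).symm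
        rw [hc2, Finset.card_insert_of_notMem (by simp [hst]), Finset.card_singleton]
      exact ⟨[s, t], hS ▸ planePath_pair hst, by simp, by simp⟩
    · have hcard3 : 3 ≤ S.card := by omega
      have hecard : 2 ≤ (S.erase t).card := by
        rw [Finset.card_erase_of_mem ht]; omega
      obtain ⟨u₁, hu₁T, u₂, hu₂T, hu12, hmax, hmin⟩ := extremes hgp ht hext hecard
      -- choose u ≠ s among the two angular extremes
      obtain ⟨u, huT, hus, σ, hσ0, hside⟩ :
          ∃ u ∈ S.erase t, u ≠ s ∧ ∃ σ : ℝ, σ ≠ 0 ∧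
            ∀ w ∈ S.erase t, w ≠ u → 0 < σ * det3 u t w := by
        by_cases h1 : u₁ = s
        · refine ⟨u₂, hu₂T, by rw [← h1]; exact hu12.symm, -1, by norm_num, ?_⟩
          intro w hw hwu
          have := hmin w hw hwu
          rw [det3_swap12, det3_eq]
          have h2 : det3 t u₂ w = Dv (u₂ - t) (w - t) := by rw [det3_eq]
          simp only [det3_eq] at *
          nlinarith
        · refine ⟨u₁, hu₁T, h1, 1, by norm_num, ?_⟩
          intro w hw hwu
          have := hmax w hw hwu
          rw [det3_swap12, det3_eq]
          nlinarith
      have huS : u ∈ S := Finset.mem_of_mem_erase huT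
      have hut : u ≠ t := (Finset.mem_erase.1 huT).1
      -- u is extreme in S.erase t
      have huext : u ∉ convexHull ℝ (((S.erase t).erase u : Finset Pt) : Set Pt) := by
        apply not_mem_hull_of_halfplane (c := σ • (t - u))
        intro w hw
        have hw' := Finset.mem_erase.1 hw
        have := hside w hw'.2 hw'.1
        rw [Dv_left_smul]
        rw [det3_eq] at this
        exact this
      have hgp' : GenPos (S.erase t) := by
        intro p hp q hq r hr
        exact hgp p (Finset.mem_of_mem_erase hp) q (Finset.mem_of_mem_erase hq)
          r (Finset.mem_of_mem_erase hr)
      have hsT : s ∈ S.erase t := Finset.mem_erase.2 ⟨hst, hs⟩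
      obtain ⟨l', hl'P, hl'h, hl'l⟩ := ih (S.erase t).card
        (by rw [Finset.card_erase_of_mem ht]; omega) (S.erase t) rfl hgp' u huT huext
        s hsT (Ne.symm hus)
      have hl'ne : l' ≠ [] := by intro h; rw [h] at hl'h; simp at hl'h
      have hl'last : l'.getLast hl'ne = u := by
        rw [List.getLast?_eq_getLast hl'ne] at hl'l
        exact Option.some_injective _ hl'l
      have htS' : t ∉ S.erase t := Finset.notMem_erase t S
      have happ := planePath_append hl'P hl'ne hl'last htS' hσ0
        (fun w hw hwu => hside w hw hwu)
      rw [Finset.insert_erase ht] at happ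
      refine ⟨l' ++ [t], happ, ?_, ?_⟩
      · rw [List.head?_append_of_ne_nil l' hl'ne]; exact hl'h
      · exact List.getLast?_concat

lemma pathToExtremeAvoid {S : Finset Pt} (hgp : GenPos S) {t : Pt} (ht : t ∈ S)
    (hext : t ∉ convexHull ℝ ((S.erase t : Finset Pt) : Set Pt)) {s : Pt} (hs : s ∈ S)
    (hst : s ≠ t) (hcard3 : 3 ≤ S.card) :
    ∃ l : List Pt, PlanePath S l ∧ l.head? = some s ∧ l.getLast? = some t ∧
      ¬ IsEdgeOf s t l := by
  have hecard : 2 ≤ (S.erase t).card := by rw [Finset.card_erase_of_mem ht]; omega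
  obtain ⟨u₁, hu₁T, u₂, hu₂T, hu12, hmax, hmin⟩ := extremes hgp ht hext hecard
  obtain ⟨u, huT, hus, σ, hσ0, hside⟩ :
      ∃ u ∈ S.erase t, u ≠ s ∧ ∃ σ : ℝ, σ ≠ 0 ∧
        ∀ w ∈ S.erase t, w ≠ u → 0 < σ * det3 u t w := by
    by_cases h1 : u₁ = s
    · refine ⟨u₂, hu₂T, by rw [← h1]; exact hu12.symm, -1, by norm_num, ?_⟩
      intro w hw hwu
      have := hmin w hw hwu
      rw [det3_swap12, det3_eq]
      nlinarith
    · refine ⟨u₁, hu₁T, h1, 1, by norm_num, ?_⟩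
      intro w hw hwu
      have := hmax w hw hwu
      rw [det3_swap12, det3_eq]
      nlinarith
  have hut : u ≠ t := (Finset.mem_erase.1 huT).1
  have huext : u ∉ convexHull ℝ (((S.erase t).erase u : Finset Pt) : Set Pt) := by
    apply not_mem_hull_of_halfplane (c := σ • (t - u))
    intro w hw
    have hw' := Finset.mem_erase.1 hw
    have := hside w hw'.2 hw'.1
    rw [Dv_left_smul]
    rw [det3_eq] at this
    exact this
  have hgp' : GenPos (S.erase t) := by
    intro p hp q hq r hr
    exact hgp p (Finset.mem_of_mem_erase hp) q (Finset.mem_of_mem_erase hq)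
      r (Finset.mem_of_mem_erase hr)
  have hsT : s ∈ S.erase t := Finset.mem_erase.2 ⟨hst, hs⟩
  obtain ⟨l', hl'P, hl'h, hl'l⟩ := pathToExtreme (S.erase t).card (S.erase t) rfl hgp'
    u huT huext s hsT (Ne.symm hus)
  have hl'ne : l' ≠ [] := by intro h; rw [h] at hl'h; simp at hl'h
  have hl'last : l'.getLast hl'ne = u := by
    rw [List.getLast?_eq_getLast hl'ne] at hl'l
    exact Option.some_injective _ hl'l
  have htS' : t ∉ S.erase t := Finset.notMem_erase t S
  have happ := planePath_append hl'P hl'ne hl'last htS' hσ0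
    (fun w hw hwu => hside w hw hwu)
  rw [Finset.insert_erase ht] at happ
  have htl' : t ∉ l' := by
    intro hc
    exact htS' (hl'P.2.1 ▸ List.mem_toFinset.2 hc)
  refine ⟨l' ++ [t], happ, ?_, List.getLast?_concat, ?_⟩
  · rw [List.head?_append_of_ne_nil l' hl'ne]; exact hl'h
  · intro hedge
    rw [IsEdgeOf, edgeList_append_singleton hl'ne t, hl'last] at hedge
    rcases hedge with h | h <;> rcases List.mem_append.1 h with h' | h'
    · exact htl' (edgeList_mem_mem h').2
    · simp only [List.mem_singleton, Prod.mk.injEq] at h'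
      exact hus h'.1.symm
    · exact htl' (edgeList_mem_mem h').1
    · simp only [List.mem_singleton, Prod.mk.injEq] at h'
      exact hut h'.1.symm


lemma Dv_self (u : Pt) : Dv u u = 0 := by simp [Dv]; ring

lemma getLast?_cons_of_ne_nil {α : Type*} (a : α) {l : List α} (h : l ≠ []) :
    (a :: l).getLast? = l.getLast? := by
  cases l with
  | nil => exact absurd rfl h
  | cons b m => simp

lemma Dv_combo_left (u w v : Pt) (α β : ℝ) :
    Dv (α • u + β • w) v = α * Dv u v + β * Dv w v := by
  simp only [Dv, Prod.fst_add, Prod.snd_add, Prod.smul_fst, Prod.smul_snd, smul_eq_mul]; ring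


/-! ### The fan (radial sweep) path around an interior point -/

lemma fan {S : Finset Pt} (hgp : GenPos S) {s c : Pt} (hs : s ∈ S) (hc : c ∈ S) (hcs : c ≠ s)
    (hcard : 3 ≤ S.card)
    (hint : s ∈ convexHull ℝ ((S.erase s : Finset Pt) : Set Pt)) :
    ∃ l : List Pt, PlanePath S l ∧ l.head? = some s ∧ l.getLast? = some c ∧
      ¬ IsEdgeOf s c l ∧
      ∀ d ∈ S, d ≠ s → d ≠ c →
        (∃ w ∈ S, w ≠ s ∧ w ≠ c ∧ w ≠ d ∧ Kv (c - s) (d - s) < Kv (c - s) (w - s)) →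
        ¬ IsEdgeOf c d l := by
  classical
  set e : Pt := c - s with he_def
  have he : e ≠ 0 := sub_ne_zero.2 hcs
  set key : Pt → ℝ := fun p => Kv e (p - s) with hkey_def
  set cmp : Pt → Pt → Bool := fun p q => decide (key p ≤ key q) with hcmp_def
  set L : List Pt := ((S.erase s).toList).mergeSort cmp with hL_def
  have hperm : L.Perm (S.erase s).toList := List.mergeSort_perm _ cmp
  have hnodupL : L.Nodup := (List.Perm.nodup_iff hperm).2 (Finset.nodup_toList _)
  have hLmem : ∀ p : Pt, p ∈ L ↔ (p ∈ S ∧ p ≠ s) := by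
    intro p
    rw [hperm.mem_iff, Finset.mem_toList, Finset.mem_erase]
    tauto
  have hsorted' : List.Pairwise (fun p q => key p ≤ key q) L := by
    have hsorted := List.pairwise_mergeSort (le := cmp)
      (fun a b c hab hbc => by
        simp only [hcmp_def, decide_eq_true_eq] at *; linarith)
      (fun a b => by
        simp only [hcmp_def, Bool.or_eq_true, decide_eq_true_eq]; exact le_total _ _)
      ((S.erase s).toList)
    rw [hL_def]
    exact hsorted.imp (fun h => by simpa [hcmp_def] using h)
  have hmemS : ∀ p ∈ L, p ∈ S := fun p hp => ((hLmem p).1 hp).1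
  have hmemns : ∀ p ∈ L, p ≠ s := fun p hp => ((hLmem p).1 hp).2
  have hDne : ∀ p ∈ L, ∀ q ∈ L, p ≠ q → Dv (p - s) (q - s) ≠ 0 := by
    intro p hp q hq hpq
    have := gp_det hgp hs (hmemS p hp) (hmemS q hq) (Ne.symm (hmemns p hp))
      (Ne.symm (hmemns q hq)) hpq
    rwa [det3_eq] at this
  have hKne : ∀ p ∈ L, ∀ q ∈ L, p ≠ q → key p ≠ key q := by
    intro p hp q hq hpq hk
    exact hDne p hp q hq hpq (Dv_eq_zero_of_Kv_eq he hk)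
  have hstrict : ∀ (i j : ℕ) (hi : i < L.length) (hj : j < L.length), i < j →
      key (L[i]'hi) < key (L[j]'hj) := by
    intro i j hi hj hij
    have h1 := (List.pairwise_iff_get.1 hsorted') ⟨i, hi⟩ ⟨j, hj⟩ hij
    have h2 : L[i]'hi ≠ L[j]'hj := by
      intro h
      have := (List.Nodup.getElem_inj_iff hnodupL).1 h
      omega
    simp only [List.get_eq_getElem] at h1
    exact lt_of_le_of_ne h1 (hKne _ (L.getElem_mem hi) _ (L.getElem_mem hj) h2)
  have hm : 2 ≤ L.length := by
    have h1 : L.length = (S.erase s).card := by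
      rw [hperm.length_eq, Finset.length_toList]
    rw [h1, Finset.card_erase_of_mem hs]; omega
  have hcL : c ∈ L := (hLmem c).2 ⟨hc, hcs⟩
  have hkeyc : key c = 10 := by
    rw [hkey_def]
    exact Kv_R4 (by rw [← he_def, Dv_self]) (by rw [← he_def]; exact dot_self_pos he)
  have hpar_c : ∀ w ∈ L, Dv e (w - s) = 0 → w = c := by
    intro w hw h
    by_contra hwc
    exact gp_det hgp hs hc (hmemS w hw) (Ne.symm hcs) (Ne.symm (hmemns w hw))
      (fun hcw => hwc hcw.symm) (by rwa [det3_eq, ← he_def])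
  have hkey_lt10 : ∀ p ∈ L, p ≠ c → key p < 10 := by
    intro p hp hpc
    rcases lt_trichotomy (Dv e (p - s)) 0 with h | h | h
    · linarith [(Kv_R3_bounds h).2]
    · exact absurd (hpar_c p hp h) hpc
    · linarith [(Kv_R1_bounds h).2]
  have hlastElem : L[L.length - 1]'(by omega) = c := by
    by_contra hne
    obtain ⟨ic, hic, hceq⟩ := List.mem_iff_getElem.1 hcL
    have hic' : ic ≠ L.length - 1 := fun h => hne (by subst h; exact hceq)
    have := hstrict ic (L.length - 1) hic (by omega) (by omega)
    rw [hceq, hkeyc] at this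
    have hlast_mem := L.getElem_mem (show L.length - 1 < L.length by omega)
    have := hkey_lt10 _ hlast_mem hne
    linarith
  have hcidx : ∀ i (hi : i < L.length), L[i]'hi = c → i = L.length - 1 := by
    intro i hi hieq
    have : L[i]'hi = L[L.length - 1]'(by omega) := by rw [hieq, hlastElem]
    have := (List.Nodup.getElem_inj_iff hnodupL).1 this
    omega
  -- consecutive points make a positively oriented (< π) angle at s
  have hDcons : ∀ i (hi : i + 1 < L.length),
      0 < Dv ((L[i]'(by omega)) - s) ((L[i+1]'hi) - s) := by
    intro i hi
    have hpL : L[i]'(by omega) ∈ L := L.getElem_mem _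
    have hqL : L[i+1]'hi ∈ L := L.getElem_mem _
    set p := L[i]'(by omega) with hp_def
    set q := L[i+1]'hi with hq_def
    have hpq : p ≠ q := by
      intro h
      have := (List.Nodup.getElem_inj_iff hnodupL).1 h
      omega
    have hkpq : key p < key q := hstrict i (i+1) (by omega) hi (by omega)
    have hDpq := hDne p hpL q hqL hpq
    have hsplit : ∀ w ∈ L, w = p ∨ w = q ∨ key w < key p ∨ key q < key w := by
      intro w hw
      obtain ⟨k, hk, hkw⟩ := List.mem_iff_getElem.1 hw
      rcases lt_trichotomy k i with h | h | h
      · right; right; left; rw [← hkw]; exact hstrict k i hk (by omega) h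
      · left
        subst h
        rw [← hkw, hp_def]
      · rcases Nat.lt_or_ge k (i + 2) with h' | h'
        · right; left
          have hki : k = i + 1 := by omega
          subst hki
          rw [← hkw, hq_def]
        · right; right; right; rw [← hkw]; exact hstrict (i+1) k hi hk (by omega)
    have hwL_of_T : ∀ w ∈ S.erase s, w ∈ L := by
      intro w hw
      exact (hLmem w).2 ⟨Finset.mem_of_mem_erase hw, (Finset.mem_erase.1 hw).1⟩
    rcases lt_trichotomy (Dv e (p - s)) 0 with hdp | hdp | hdp
    · rcases lt_trichotomy (Dv e (q - s)) 0 with hdq | hdq | hdq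
      · exact (Kv_lt_iff_core he (mul_pos_of_neg_of_neg hdp hdq)).1 hkpq
      · have hq_c : q = c := hpar_c q hqL hdq
        rw [hq_c, ← he_def, Dv_swap]
        linarith
      · exfalso
        linarith [(Kv_R3_bounds hdp).1, (Kv_R1_bounds hdq).2]
    · exfalso
      have hp_c : p = c := hpar_c p hpL hdp
      have := hcidx i (by omega) hp_c
      omega
    · rcases lt_trichotomy (Dv e (q - s)) 0 with hdq | hdq | hdq
      · -- interior switch case
        by_contra hcon
        have hneg : Dv (p - s) (q - s) < 0 := by
          rcases lt_or_gt_of_ne hDpq with h | h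
          · exact h
          · exact absurd h hcon
        refine hullcon (T := S.erase s) (u := p - s) hint (Finset.notMem_erase s S) ?_ ?_
        · intro w hwT
          have hwL := hwL_of_T w hwT
          rcases hsplit w hwL with rfl | rfl | hk | hk
          · rw [Dv_self]
          · exact hneg.le
          · have hwR1 : 0 < Dv e (w - s) := by
              rcases lt_trichotomy (Dv e (w - s)) 0 with h | h | h
              · exfalso; linarith [(Kv_R3_bounds h).1, (Kv_R1_bounds hdp).2]
              · exfalso
                have := hpar_c w hwL h
                rw [this, hkeyc] at hk
                linarith [(Kv_R1_bounds hdp).2]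
              · exact h
            have := (Kv_lt_iff_core he (mul_pos hwR1 hdp)).1 hk
            rw [Dv_swap]; linarith
          · rcases lt_trichotomy (Dv e (w - s)) 0 with h | h | h
            · have hcore := (Kv_lt_iff_core he (mul_pos_of_neg_of_neg hdq h)).1 hk
              have hpl := pluecker e (p - s) (q - s) (w - s)
              nlinarith
            · have := hpar_c w hwL h
              rw [this, ← he_def, Dv_swap]
              linarith
            · exfalso; linarith [(Kv_R1_bounds h).2, (Kv_R3_bounds hdq).1]
        · intro w hwT w' hwT' h1 h2
          have hz : ∀ v ∈ L, Dv (p - s) (v - s) = 0 → v = p := by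
            intro v hvL hv
            by_contra hne
            exact hDne p hpL v hvL (fun h => hne h.symm) hv
          rw [hz w (hwL_of_T w hwT) h1, hz w' (hwL_of_T w' hwT') h2]
      · -- q = c with p in R1 : impossible since then everything is on one side
        exfalso
        have hq_c : q = c := hpar_c q hqL hdq
        have hic : i + 1 = L.length - 1 := hcidx (i+1) hi (by rw [← hq_def]; exact hq_c)
        refine hullcon (T := S.erase s) (u := -e) hint (Finset.notMem_erase s S) ?_ ?_
        · intro w hwT
          have hwL := hwL_of_T w hwT
          rw [Dv_neg_left]
          rcases hsplit w hwL with rfl | rfl | hk | hk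
          · linarith
          · rw [hq_c, ← he_def, Dv_self]; norm_num
          · have hwR1 : 0 < Dv e (w - s) := by
              rcases lt_trichotomy (Dv e (w - s)) 0 with h | h | h
              · exfalso; linarith [(Kv_R3_bounds h).1, (Kv_R1_bounds hdp).2]
              · exfalso
                have := hpar_c w hwL h
                rw [this, hkeyc] at hk
                linarith [(Kv_R1_bounds hdp).2]
              · exact h
            linarith
          · exfalso
            rw [hq_c, hkeyc] at hk
            have h10 : key w ≤ 10 := Kv_le_ten e (w - s)
            linarith
        · intro w hwT w' hwT' h1 h2
          rw [Dv_neg_left, neg_eq_zero] at h1 h2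
          rw [hpar_c w (hwL_of_T w hwT) h1, hpar_c w' (hwL_of_T w' hwT') h2]
      · exact (Kv_lt_iff_core he (mul_pos hdp hdq)).1 hkpq
  -- basic structure of the path s :: L
  have hLfin : L.toFinset = S.erase s := by
    ext p; rw [List.mem_toFinset, hLmem, Finset.mem_erase]; tauto
  have hsnotinL : s ∉ L := fun h => (hmemns s h) rfl
  have hnodl : (s :: L).Nodup := List.nodup_cons.2 ⟨hsnotinL, hnodupL⟩
  have hLne : L ≠ [] := by intro h; rw [h] at hm; simp at hm
  -- s is not on any chord
  have hT2 : ∀ (k : ℕ) (hk : k + 1 < L.length),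
      s ∉ segment ℝ (L[k]'(by omega)) (L[k+1]'hk) := by
    intro k hk hcon
    have hne : L[k]'(by omega) ≠ L[k+1]'hk := by
      intro h; have := (List.Nodup.getElem_inj_iff hnodupL).1 h; omega
    exact gp_det hgp (hmemS _ (L.getElem_mem _)) (hmemS _ (L.getElem_mem _)) hs hne
      (hmemns _ (L.getElem_mem _)) (hmemns _ (L.getElem_mem _))
      (det3_seg_zero hcon)
  -- key sandwich for points on chords
  have hT3 : ∀ (k : ℕ) (hk : k + 1 < L.length), ∀ x : Pt,
      x ∈ segment ℝ (L[k]'(by omega)) (L[k+1]'hk) → x ≠ s →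
      key (L[k]'(by omega)) ≤ Kv e (x - s) ∧ Kv e (x - s) ≤ key (L[k+1]'hk) := by
    intro k hk x hxseg hxs
    obtain ⟨α, β, hα, hβ, hab, hxc⟩ := seg_combo hxseg
    have hvec := seg_vec_combo (s := s) hab hxc
    have hK := hstrict k (k+1) (by omega) hk (by omega)
    have hcone := coneK he hK (hDcons k hk) hα hβ (by rw [← hvec]; exact sub_ne_zero.2 hxs)
    rw [← hvec] at hcone
    exact hcone
  -- endpoint pinning
  have hT4r : ∀ (k : ℕ) (hk : k + 1 < L.length), ∀ x : Pt,
      x ∈ segment ℝ (L[k]'(by omega)) (L[k+1]'hk) →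
      Kv e (x - s) = key (L[k+1]'hk) → x = L[k+1]'hk := by
    intro k hk x hxseg hKx
    obtain ⟨α, β, hα, hβ, hab, hxc⟩ := seg_combo hxseg
    have hvec := seg_vec_combo (s := s) hab hxc
    have hDz : Dv (x - s) ((L[k+1]'hk) - s) = 0 := Dv_eq_zero_of_Kv_eq he hKx
    rw [hvec, Dv_combo_left, Dv_self] at hDz
    have hD := hDcons k hk
    have hα0 : α = 0 := by
      rcases mul_eq_zero.1 (by linarith :
          α * Dv ((L[k]'(by omega)) - s) ((L[k+1]'hk) - s) = 0) with h | h
      · exact h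
      · exact absurd h (ne_of_gt hD)
    have hβ1 : β = 1 := by linarith
    rw [hα0, hβ1] at hxc; simpa using hxc
  have hT4l : ∀ (k : ℕ) (hk : k + 1 < L.length), ∀ x : Pt,
      x ∈ segment ℝ (L[k]'(by omega)) (L[k+1]'hk) →
      Kv e (x - s) = key (L[k]'(by omega)) → x = L[k]'(by omega) := by
    intro k hk x hxseg hKx
    obtain ⟨α, β, hα, hβ, hab, hxc⟩ := seg_combo hxseg
    have hvec := seg_vec_combo (s := s) hab hxc
    have hDz : Dv (x - s) ((L[k]'(by omega)) - s) = 0 := Dv_eq_zero_of_Kv_eq he hKx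
    rw [hvec, Dv_combo_left, Dv_self] at hDz
    have hD := hDcons k hk
    have hDqp : Dv ((L[k+1]'hk) - s) ((L[k]'(by omega)) - s) < 0 := by
      rw [Dv_swap]; linarith
    have hβ0 : β = 0 := by
      rcases mul_eq_zero.1 (by linarith :
          β * Dv ((L[k+1]'hk) - s) ((L[k]'(by omega)) - s) = 0) with h | h
      · exact h
      · exact absurd h (ne_of_lt hDqp)
    have hα1 : α = 1 := by linarith
    rw [hβ0, hα1] at hxc; simpa using hxc
  -- the main planarity claim for a pair of edges at positions i < j
  have claim : ∀ (i j : ℕ) (hij : i < j) (hj : j + 1 < (s :: L).length),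
      segment ℝ ((s :: L)[i]'(by omega)) ((s :: L)[i+1]'(by omega)) ∩
        segment ℝ ((s :: L)[j]'(by omega)) ((s :: L)[j+1]'hj) ⊆
      (({(s :: L)[i]'(by omega), (s :: L)[i+1]'(by omega)} : Set Pt) ∩
        {(s :: L)[j]'(by omega), (s :: L)[j+1]'hj}) := by
    intro i j hij hj
    have hlen : (s :: L).length = L.length + 1 := rfl
    obtain ⟨j', rfl⟩ : ∃ j', j = j' + 1 := ⟨j - 1, by omega⟩
    have hj' : j' + 1 < L.length := by omega
    rcases Nat.eq_zero_or_pos i with rfl | hipos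
    · simp only [List.getElem_cons_zero, List.getElem_cons_succ]
      rintro x ⟨hx1, hx2⟩
      by_cases hxs : x = s
      · exact absurd (hxs ▸ hx2) (hT2 j' hj')
      obtain ⟨α, β, hα, hβ, hab, hxc⟩ := seg_combo hx1
      have hvec : x - s = β • ((L[0]'(by omega)) - s) := by
        have := seg_vec_combo (s := s) hab hxc
        simpa using this
      have hβpos : 0 < β := by
        rcases hβ.eq_or_lt with h | h
        · exfalso
          apply hxs
          have hx0 : x - s = 0 := by rw [hvec, ← h]; simp
          exact sub_eq_zero.1 hx0
        · exact h
      have hKx : Kv e (x - s) = key (L[0]'(by omega)) := by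
        rw [hvec, Kv_smul hβpos]
      rcases Nat.eq_zero_or_pos j' with rfl | hj'pos
      · have hx0 : x = L[0]'(by omega) := hT4l 0 hj' x hx2 hKx
        rw [hx0]
        exact ⟨by right; rfl, by left; rfl⟩
      · exfalso
        have hlow := (hT3 j' hj' x hx2 hxs).1
        have hmono := hstrict 0 j' (by omega) (by omega) hj'pos
        rw [hKx] at hlow
        linarith
    · obtain ⟨i', rfl⟩ : ∃ i', i = i' + 1 := ⟨i - 1, by omega⟩
      have hi' : i' + 1 < L.length := by omega
      simp only [List.getElem_cons_succ]
      rintro x ⟨hx1, hx2⟩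
      have hxs : x ≠ s := fun h => (hT2 i' hi') (h ▸ hx1)
      have hs1 := hT3 i' hi' x hx1 hxs
      have hs2 := hT3 j' hj' x hx2 hxs
      rcases Nat.lt_or_ge (i' + 1) j' with hlt | hge
      · exfalso
        have := hstrict (i'+1) j' (by omega) (by omega) hlt
        linarith [hs1.2, hs2.1]
      · have heq : i' + 1 = j' := by omega
        subst heq
        have hKx : Kv e (x - s) = key (L[i'+1]'(by omega)) := le_antisymm hs1.2 hs2.1
        have hx0 : x = L[i'+1]'(by omega) := hT4r i' hi' x hx1 hKx
        rw [hx0]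
        exact ⟨by right; rfl, by left; rfl⟩
  -- assemble the plane path
  have hplane : PlanePath S (s :: L) := by
    refine ⟨hnodl, ?_, ?_⟩
    · rw [List.toFinset_cons, hLfin, Finset.insert_erase hs]
    · rintro ⟨x1, x2⟩ hef ⟨y1, y2⟩ hff hne
      obtain ⟨i, hi, hxi1, hxi2⟩ := mem_edgeList.1 hef
      obtain ⟨j, hjlen, hyj1, hyj2⟩ := mem_edgeList.1 hff
      rcases lt_trichotomy i j with hij | hij | hij
      · have hcl := claim i j hij hjlen
        rw [hxi1, hxi2, hyj1, hyj2] at hcl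
        exact hcl
      · exfalso
        apply hne
        subst hij
        rw [Prod.mk.injEq]
        constructor
        · rw [← hxi1, ← hyj1]
        · rw [← hxi2, ← hyj2]
      · have hcl := claim j i hij hi
        rw [hxi1, hxi2, hyj1, hyj2] at hcl
        intro z hz
        have := hcl ⟨hz.2, hz.1⟩
        exact ⟨this.2, this.1⟩
  have hlast? : (s :: L).getLast? = some c := by
    rw [getLast?_cons_of_ne_nil s hLne, List.getLast?_eq_getLast hLne,
      List.getLast_eq_getElem]
    exact congrArg some hlastElem
  have hidx_s : ∀ (i : ℕ) (hi : i < (s :: L).length), (s :: L)[i]'hi = s → i = 0 := by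
    intro i hi hieq
    have h0 : (s :: L)[i]'hi = (s :: L)[0]'(by simp) := by rw [hieq]; rfl
    exact (List.Nodup.getElem_inj_iff hnodl).1 h0
  have hidx_c : ∀ (i : ℕ) (hi : i < (s :: L).length), (s :: L)[i]'hi = c → i = L.length := by
    intro i hi hieq
    rcases Nat.eq_zero_or_pos i with rfl | hpos
    · exfalso; rw [List.getElem_cons_zero] at hieq; exact hcs hieq.symm
    · obtain ⟨i', rfl⟩ : ∃ i', i = i' + 1 := ⟨i - 1, by omega⟩
      rw [List.getElem_cons_succ] at hieq
      have := hcidx i' (by simp at hi; omega) hieq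
      omega
  have hnoedge_sc : ¬ IsEdgeOf s c (s :: L) := by
    rintro (h | h)
    · obtain ⟨i, hi, h1, h2⟩ := mem_edgeList.1 h
      have hi0 := hidx_s i (by omega) h1
      have hic := hidx_c (i+1) hi h2
      simp only [List.length_cons] at hi
      omega
    · obtain ⟨i, hi, h1, h2⟩ := mem_edgeList.1 h
      have := hidx_s (i+1) hi h2
      omega
  refine ⟨s :: L, hplane, rfl, hlast?, hnoedge_sc, ?_⟩
  rintro d hd hds hdc ⟨w, hw, hws, hwc, hwd, hkdw⟩ (h | h)
  · obtain ⟨i, hi, h1, h2⟩ := mem_edgeList.1 h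
    have := hidx_c i (by omega) h1
    simp only [List.length_cons] at hi
    omega
  · obtain ⟨i, hi, h1, h2⟩ := mem_edgeList.1 h
    have hic := hidx_c (i+1) hi h2
    rcases Nat.eq_zero_or_pos i with rfl | hpos
    · rw [List.getElem_cons_zero] at h1; exact hds h1.symm
    obtain ⟨i', rfl⟩ : ∃ i', i = i' + 1 := ⟨i - 1, by omega⟩
    rw [List.getElem_cons_succ] at h1
    obtain ⟨k, hk, hkw⟩ := List.mem_iff_getElem.1 ((hLmem w).2 ⟨hw, hws⟩)
    have hkne : k ≠ L.length - 1 := by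
      intro hkk
      subst hkk
      exact hwc (by rw [← hkw, hlastElem])
    have hkne2 : k ≠ i' := by
      intro hkk
      subst hkk
      exact hwd (by rw [← hkw, h1])
    have hklt : k < i' := by omega
    have hmono := hstrict k i' hk (by omega) hklt
    rw [hkw, h1] at hmono
    have hkdw' : key d < key w := hkdw
    linarith


/-! ### Final assembly -/

lemma isEdgeOf_symm {a b : Pt} {l : List Pt} : IsEdgeOf a b l ↔ IsEdgeOf b a l :=
  or_comm

lemma mem_edgeList_cons {a x y : Pt} {l : List Pt} :
    (x, y) ∈ edgeList (a :: l) ↔ (x = a ∧ l.head? = some y) ∨ (x, y) ∈ edgeList l := by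
  cases l with
  | nil => simp [edgeList]
  | cons b m =>
    have h1 : edgeList (a :: b :: m) = (a, b) :: edgeList (b :: m) := rfl
    rw [h1]
    simp only [List.mem_cons, Prod.mk.injEq, List.head?_cons, Option.some.injEq]
    tauto

lemma base3 {S : Finset Pt} (hgp : GenPos S) (hcard : S.card = 3) {a b : Pt}
    (ha : a ∈ S) (hb : b ∈ S) (hab : a ≠ b) :
    ∃ l : List Pt, PlanePath S l ∧ l.head? = some a ∧ l.getLast? = some b ∧
      ¬ IsEdgeOf a b l := by
  obtain ⟨w, hwS, hwa, hwb⟩ : ∃ w ∈ S, w ≠ a ∧ w ≠ b := by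
    have hbm : b ∈ S.erase a := Finset.mem_erase.2 ⟨hab.symm, hb⟩
    have h2 : ((S.erase a).erase b).card = 1 := by
      rw [Finset.card_erase_of_mem hbm, Finset.card_erase_of_mem ha, hcard]
    obtain ⟨w, hw⟩ := Finset.card_pos.1 (by omega : 0 < ((S.erase a).erase b).card)
    have h1 := Finset.mem_erase.1 hw
    have h3 := Finset.mem_erase.1 h1.2
    exact ⟨w, h3.2, h3.1, h1.1⟩
  have hS : S = {a, w, b} := by
    have hsub : ({a, w, b} : Finset Pt) ⊆ S := by
      intro x hx
      simp only [Finset.mem_insert, Finset.mem_singleton] at hx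
      rcases hx with rfl | rfl | rfl
      · exact ha
      · exact hwS
      · exact hb
    refine (Finset.eq_of_subset_of_card_le hsub ?_).symm
    rw [hcard, Finset.card_insert_of_notMem (by simp [Ne.symm hwa, hab]),
      Finset.card_insert_of_notMem (by simp [hwb]), Finset.card_singleton]
  have hdet : det3 a w b ≠ 0 := gp_det hgp ha hwS hb (Ne.symm hwa) hab hwb
  refine ⟨[a, w, b], hS ▸ planePath_triple (Ne.symm hwa) hab hwb hdet, by simp, by simp, ?_⟩
  rintro (h | h)
  · rcases mem_edgeList_cons.1 h with ⟨_, h2⟩ | h2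
    · simp only [List.head?_cons, Option.some.injEq] at h2
      exact hwb h2
    · rcases mem_edgeList_cons.1 h2 with ⟨h3, _⟩ | h3
      · exact hwa h3.symm
      · simp [edgeList] at h3
  · rcases mem_edgeList_cons.1 h with ⟨h2, _⟩ | h2
    · exact hab h2.symm
    · rcases mem_edgeList_cons.1 h2 with ⟨h3, _⟩ | h3
      · exact hwb h3.symm
      · simp [edgeList] at h3

lemma mainAux : ∀ n : ℕ, ∀ S : Finset Pt, S.card = n → GenPos S →
    ∀ a b s : Pt, a ∈ S → b ∈ S → a ≠ b → s ∈ S →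
    (4 ≤ S.card ∨ (S.card = 3 ∧ (s = a ∨ s = b))) →
    ∃ l : List Pt, PlanePath S l ∧ l.head? = some s ∧
      (l.getLast? = some a ∨ l.getLast? = some b) ∧ ¬ IsEdgeOf a b l := by
  intro n
  induction n using Nat.strong_induction_on with
  | _ n ih =>
  intro S hcard hgp a b s ha hb hab hs hcond
  have hcard3 : 3 ≤ S.card := by rcases hcond with h | ⟨h, _⟩ <;> omega
  by_cases hint : s ∈ convexHull ℝ ((S.erase s : Finset Pt) : Set Pt)
  · -- s is interior: use the fan construction
    by_cases hsa : s = a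
    · subst hsa
      have hbs : b ≠ s := fun h => hab h.symm
      obtain ⟨l, hP, hh, hl, hnsc, _⟩ := fan hgp hs hb hbs hcard3 hint
      exact ⟨l, hP, hh, Or.inr hl, hnsc⟩
    by_cases hsb : s = b
    · subst hsb
      have has : a ≠ s := hab
      obtain ⟨l, hP, hh, hl, hnsc, _⟩ := fan hgp hs ha has hcard3 hint
      refine ⟨l, hP, hh, Or.inl hl, ?_⟩
      rw [isEdgeOf_symm]
      exact hnsc
    · -- s differs from both a and b
      have has' : a ≠ s := fun h => hsa h.symm
      have hbs' : b ≠ s := fun h => hsb h.symm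
      by_cases hw : ∃ w ∈ S, w ≠ s ∧ w ≠ a ∧ w ≠ b ∧
          Kv (a - s) (b - s) < Kv (a - s) (w - s)
      · obtain ⟨l, hP, hh, hl, _, havoid⟩ := fan hgp hs ha has' hcard3 hint
        refine ⟨l, hP, hh, Or.inl hl, ?_⟩
        exact havoid b hb hbs' (Ne.symm hab)
          (by obtain ⟨w, h1, h2, h3, h4, h5⟩ := hw; exact ⟨w, h1, h2, h3, h4, h5⟩)
      · -- flip the roles of a and b
        have hcard4 : 4 ≤ S.card := by
          rcases hcond with h | h
          · exact h
          · exact absurd h.2 (by push_neg; exact ⟨hsa, hsb⟩)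
        obtain ⟨w, hwS, hws, hwa, hwb⟩ : ∃ w ∈ S, w ≠ s ∧ w ≠ a ∧ w ≠ b := by
          have h1 : b ∈ (S.erase s).erase a := by
            rw [Finset.mem_erase, Finset.mem_erase]
            exact ⟨Ne.symm hab, hbs', hb⟩
          have h2 : 0 < (((S.erase s).erase a).erase b).card := by
            rw [Finset.card_erase_of_mem h1, Finset.card_erase_of_mem
              (Finset.mem_erase.2 ⟨has', ha⟩), Finset.card_erase_of_mem hs]
            omega
          obtain ⟨w, hw⟩ := Finset.card_pos.1 h2
          have g1 := Finset.mem_erase.1 hw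
          have g2 := Finset.mem_erase.1 g1.2
          have g3 := Finset.mem_erase.1 g2.2
          exact ⟨w, g3.2, g3.1, g2.1, g1.1⟩
        push_neg at hw
        have hKwb : Kv (a - s) (w - s) < Kv (a - s) (b - s) := by
          rcases lt_or_eq_of_le (hw w hwS hws hwa hwb) with h | h
          · exact h
          · exfalso
            have hD0 := Dv_eq_zero_of_Kv_eq (sub_ne_zero.2 has') h.symm
            have := gp_det hgp hs hb hwS (Ne.symm hbs') (Ne.symm hws) (fun hbw => hwb hbw.symm)
            rw [det3_eq] at this
            exact this hD0
        have hflip := flipK (sub_ne_zero.2 has') (sub_ne_zero.2 hbs')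
          (by have := gp_det hgp hs ha hwS (Ne.symm has') (Ne.symm hws)
                (fun h => hwa h.symm)
              rwa [det3_eq] at this)
          (by have := gp_det hgp hs ha hb (Ne.symm has') (Ne.symm hbs') hab
              rwa [det3_eq] at this)
          (by have := gp_det hgp hs hwS hb (Ne.symm hws) (Ne.symm hbs') hwb
              rwa [det3_eq] at this)
          hKwb
        obtain ⟨l, hP, hh, hl, _, havoid⟩ := fan hgp hs hb hbs' hcard3 hint
        refine ⟨l, hP, hh, Or.inr hl, ?_⟩
        rw [isEdgeOf_symm]
        exact havoid a ha has' hab ⟨w, hwS, hws, hwb, hwa, hflip⟩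
  · -- s is extreme
    by_cases hsa : s = a
    · subst hsa
      have hbs : b ≠ s := fun h => hab h.symm
      obtain ⟨l, hP, hh, hl, hne⟩ := pathToExtremeAvoid hgp hs hint hb hbs hcard3
      refine ⟨l.reverse, planePath_reverse hP, ?_, Or.inr ?_, ?_⟩
      · rw [List.head?_reverse]; exact hl
      · rw [List.getLast?_reverse]; exact hh
      · rw [isEdgeOf_reverse, isEdgeOf_symm]
        exact hne
    by_cases hsb : s = b
    · subst hsb
      have has : a ≠ s := hab
      obtain ⟨l, hP, hh, hl, hne⟩ := pathToExtremeAvoid hgp hs hint ha has hcard3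
      refine ⟨l.reverse, planePath_reverse hP, ?_, Or.inl ?_, ?_⟩
      · rw [List.head?_reverse]; exact hl
      · rw [List.getLast?_reverse]; exact hh
      · rw [isEdgeOf_reverse]
        exact hne
    · -- peel off s
      have has' : a ≠ s := fun h => hsa h.symm
      have hbs' : b ≠ s := fun h => hsb h.symm
      have hcard4 : 4 ≤ S.card := by
        rcases hcond with h | h
        · exact h
        · exact absurd h.2 (by push_neg; exact ⟨hsa, hsb⟩)
      have hecard : 2 ≤ (S.erase s).card := by
        rw [Finset.card_erase_of_mem hs]; omega
      obtain ⟨u₁, hu₁, u₂, hu₂, h12, hmax, hmin⟩ := extremes hgp hs hint hecard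
      -- choose the attachment vertex u
      obtain ⟨u, huT, σ, hσ0, hside, hcond'⟩ :
          ∃ u ∈ S.erase s, ∃ σ : ℝ, σ ≠ 0 ∧
            (∀ w ∈ S.erase s, w ≠ u → 0 < σ * det3 u s w) ∧
            (4 ≤ (S.erase s).card ∨ ((S.erase s).card = 3 ∧ (u = a ∨ u = b))) := by
        have hecard' : (S.erase s).card = S.card - 1 := Finset.card_erase_of_mem hs
        have hside1 : ∀ w ∈ S.erase s, w ≠ u₁ → 0 < 1 * det3 u₁ s w := by
          intro w hw hwu
          have := hmax w hw hwu
          rw [det3_swap12, det3_eq]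
          nlinarith
        have hside2 : ∀ w ∈ S.erase s, w ≠ u₂ → 0 < (-1) * det3 u₂ s w := by
          intro w hw hwu
          have := hmin w hw hwu
          rw [det3_swap12, det3_eq]
          nlinarith
        by_cases h5 : 5 ≤ S.card
        · exact ⟨u₁, hu₁, 1, one_ne_zero, hside1, Or.inl (by omega)⟩
        · have hc4 : S.card = 4 := by omega
          have hchoose : u₁ = a ∨ u₁ = b ∨ u₂ = a ∨ u₂ = b := by
            by_contra hcon
            push_neg at hcon
            obtain ⟨n1, n2, n3, n4⟩ := hcon
            have hbm : b ∈ (S.erase s).erase a := by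
              rw [Finset.mem_erase, Finset.mem_erase]
              exact ⟨Ne.symm hab, hbs', hb⟩
            have hcc : (((S.erase s).erase a).erase b).card = 1 := by
              rw [Finset.card_erase_of_mem hbm, Finset.card_erase_of_mem
                (Finset.mem_erase.2 ⟨has', ha⟩), hecard', hc4]
            have hu₁m : u₁ ∈ ((S.erase s).erase a).erase b :=
              Finset.mem_erase.2 ⟨n2, Finset.mem_erase.2 ⟨n1, hu₁⟩⟩
            have hu₂m : u₂ ∈ ((S.erase s).erase a).erase b :=
              Finset.mem_erase.2 ⟨n4, Finset.mem_erase.2 ⟨n3, hu₂⟩⟩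
            obtain ⟨z, hz⟩ := Finset.card_eq_one.1 hcc
            rw [hz, Finset.mem_singleton] at hu₁m hu₂m
            exact h12 (hu₁m.trans hu₂m.symm)
          rcases hchoose with h' | h' | h' | h'
          · exact ⟨u₁, hu₁, 1, one_ne_zero, hside1, Or.inr ⟨by omega, Or.inl h'⟩⟩
          · exact ⟨u₁, hu₁, 1, one_ne_zero, hside1, Or.inr ⟨by omega, Or.inr h'⟩⟩
          · exact ⟨u₂, hu₂, -1, by norm_num, hside2, Or.inr ⟨by omega, Or.inl h'⟩⟩
          · exact ⟨u₂, hu₂, -1, by norm_num, hside2, Or.inr ⟨by omega, Or.inr h'⟩⟩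
      have hgp' : GenPos (S.erase s) := by
        intro p hp q hq r hr
        exact hgp p (Finset.mem_of_mem_erase hp) q (Finset.mem_of_mem_erase hq)
          r (Finset.mem_of_mem_erase hr)
      obtain ⟨P, hPP, hPh, hPl, hPne⟩ := ih (S.erase s).card
        (by rw [Finset.card_erase_of_mem hs]; omega) (S.erase s) rfl hgp' a b u
        (Finset.mem_erase.2 ⟨has', ha⟩) (Finset.mem_erase.2 ⟨hbs', hb⟩) hab huT hcond'
      have hPnil : P ≠ [] := by intro h; rw [h] at hPh; simp at hPh
      have hPrev : P.reverse ≠ [] := by simpa using hPnil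
      have hPrevlast : P.reverse.getLast hPrev = u := by
        have h1 : P.reverse.getLast? = some u := by
          rw [List.getLast?_reverse]; exact hPh
        rw [List.getLast?_eq_getLast hPrev] at h1
        exact Option.some_injective _ h1
      have happ := planePath_append (planePath_reverse hPP) hPrev hPrevlast
        (Finset.notMem_erase s S) hσ0 hside
      rw [Finset.insert_erase hs] at happ
      have happ2 := planePath_reverse happ
      have hrw : (P.reverse ++ [s]).reverse = s :: P := by simp
      rw [hrw] at happ2
      refine ⟨s :: P, happ2, rfl, ?_, ?_⟩
      · rw [getLast?_cons_of_ne_nil s hPnil]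
        exact hPl
      · rintro (h | h)
        · rcases mem_edgeList_cons.1 h with ⟨h1, _⟩ | h1
          · exact hsa h1.symm
          · exact hPne (Or.inl h1)
        · rcases mem_edgeList_cons.1 h with ⟨h1, _⟩ | h1
          · exact hsb h1.symm
          · exact hPne (Or.inr h1)

end PfAux

/-- On a set of at least 4 points in general position, for distinct
`a, b ∈ S` and any `s ∈ S`, there is a plane Hamiltonian path with one endpoint `s`,
the other endpoint `a` or `b`, avoiding the segment `ab`. -/
theorem stmt_3 (S : Finset Pt) (hcard : 4 ≤ S.card) (hgp : GenPos S)
    (a b : Pt) (ha : a ∈ S) (hb : b ∈ S) (hab : a ≠ b)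
    (s : Pt) (hs : s ∈ S) :
    ∃ l : List Pt, PlanePath S l ∧ l.head? = some s ∧
      (l.getLast? = some a ∨ l.getLast? = some b) ∧ ¬ IsEdgeOf a b l :=
  PfAux.mainAux S.card S rfl hgp a b s ha hb hab hs (Or.inl hcard)
end
end

section
/- Let S be a set of n points in general position in the plane, and let a, b ∈ S be two non-consecutive vertices on the boundary of the convex hull of S (i.e., ab is a diagonal, not an edge, of the convex hull). If s, t ∈ S lie in the same closed halfplane determined by the line through a and b, then there is no plane Hamiltonian path on S with endpoints s and t that contains the segment ab as an edge. -/
open Set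
open scoped Classical

noncomputable section

-- ### auxiliary lemmas

lemma pt_ext {p q : Pt} (h1 : p.1 = q.1) (h2 : p.2 = q.2) : p = q := Prod.ext h1 h2

lemma det3_swap (a b p : Pt) : det3 b a p = - det3 a b p := by
  simp only [det3]; ring

lemma det3_self_left (a b : Pt) : det3 a b a = 0 := by simp [det3]

lemma det3_self_right (a b : Pt) : det3 a b b = 0 := by simp [det3]; ring

lemma det3_zero_param {a b z : Pt} (hab : a ≠ b) (h : det3 a b z = 0) :
    ∃ u : ℝ, z = a + u • (b - a) := by
  by_cases h1 : b.1 = a.1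
  · have h2 : b.2 ≠ a.2 := by
      intro h2; exact hab (pt_ext h1.symm h2.symm)
    have h2' : b.2 - a.2 ≠ 0 := sub_ne_zero.2 h2
    have hz1 : z.1 = a.1 := by
      simp only [det3, h1] at h
      have : (b.2 - a.2) * (z.1 - a.1) = 0 := by linarith
      rcases mul_eq_zero.1 this with h' | h'
      · exact absurd h' h2'
      · linarith
    refine ⟨(z.2 - a.2) / (b.2 - a.2), pt_ext ?_ ?_⟩ <;>
      simp only [Prod.fst_add, Prod.snd_add, Prod.smul_fst, Prod.smul_snd,
        Prod.fst_sub, Prod.snd_sub, smul_eq_mul]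
    · rw [hz1, h1]; ring
    · rw [div_mul_cancel₀ _ h2']; ring
  · have hb1 : b.1 - a.1 ≠ 0 := sub_ne_zero.2 h1
    refine ⟨(z.1 - a.1) / (b.1 - a.1), pt_ext ?_ ?_⟩ <;>
      simp only [Prod.fst_add, Prod.snd_add, Prod.smul_fst, Prod.smul_snd,
        Prod.fst_sub, Prod.snd_sub, smul_eq_mul]
    · rw [div_mul_cancel₀ _ hb1]; ring
    · simp only [det3] at h
      have hkey : z.2 - a.2 = (z.1 - a.1) * (b.2 - a.2) / (b.1 - a.1) := by
        rw [eq_div_iff hb1]; linear_combination h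
      rw [div_mul_eq_mul_div]
      linarith [hkey]

lemma det3_ne_zero_of_genpos {S : Finset Pt} (hgp : GenPos S) {a b p : Pt}
    (ha : a ∈ S) (hb : b ∈ S) (hp : p ∈ S) (hab : a ≠ b) (hpa : p ≠ a) (hpb : p ≠ b) :
    det3 a b p ≠ 0 := by
  intro h0
  apply hgp a ha b hb p hp hab (Ne.symm hpa) (Ne.symm hpb)
  obtain ⟨u, hu⟩ := det3_zero_param hab h0
  rw [collinear_iff_exists_forall_eq_smul_vadd]
  refine ⟨a, b - a, ?_⟩
  intro q hq
  rcases hq with rfl | rfl | rfl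
  · exact ⟨0, by simp⟩
  · exact ⟨1, by simp⟩
  · exact ⟨u, by rw [hu]; simp [vadd_eq_add]; abel⟩

/-- The line through two extreme points meets the hull only in the segment. -/
lemma mem_segment_of_det_zero {S : Finset Pt} {a b z : Pt}
    (ha : a ∈ S) (hb : b ∈ S) (hab : a ≠ b)
    (hav : a ∈ Set.extremePoints ℝ (convexHull ℝ (S : Set Pt)))
    (hbv : b ∈ Set.extremePoints ℝ (convexHull ℝ (S : Set Pt)))
    (hz : z ∈ convexHull ℝ (S : Set Pt)) (h0 : det3 a b z = 0) :
    z ∈ segment ℝ a b := by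
  obtain ⟨u, hu⟩ := det3_zero_param hab h0
  have hba : b - a ≠ 0 := sub_ne_zero.2 (Ne.symm hab)
  have haS : a ∈ convexHull ℝ (S : Set Pt) := subset_convexHull ℝ _ (by exact_mod_cast ha)
  have hbS : b ∈ convexHull ℝ (S : Set Pt) := subset_convexHull ℝ _ (by exact_mod_cast hb)
  rcases lt_trichotomy u 0 with hu0 | hu0
  · exfalso
    -- a ∈ openSegment z b
    have hden : u - 1 < 0 := by linarith
    have hden' : u - 1 ≠ 0 := by linarith
    set s : ℝ := u / (u - 1) with hs
    have hs0 : 0 < s := div_pos_of_neg_of_neg hu0 hden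
    have hs1 : s < 1 := by
      rw [hs, div_lt_one_of_neg hden]; linarith
    have hseg : a ∈ openSegment ℝ z b := by
      refine ⟨1 - s, s, by linarith, hs0, by ring, ?_⟩
      rw [hu]
      refine pt_ext ?_ ?_ <;>
        simp only [Prod.fst_add, Prod.snd_add, Prod.smul_fst, Prod.smul_snd,
          Prod.fst_sub, Prod.snd_sub, smul_eq_mul, hs] <;>
        field_simp <;> ring
    have hza := ((mem_extremePoints.1 hav).2 z hz b hbS hseg).1
    rw [hza] at hu
    have h0' : u • (b - a) = 0 := left_eq_add.1 hu
    rcases smul_eq_zero.1 h0' with h' | h'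
    · linarith
    · exact hba h'
  · rcases lt_trichotomy u 1 with hu1 | hu1 | hu1
    · -- 0 ≤ u < 1 : z ∈ segment a b
      refine ⟨1 - u, u, by linarith, by rcases hu0 with rfl | h <;> linarith, by ring, ?_⟩
      rw [hu]
      refine pt_ext ?_ ?_ <;>
        simp only [Prod.fst_add, Prod.snd_add, Prod.smul_fst, Prod.smul_snd,
          Prod.fst_sub, Prod.snd_sub, smul_eq_mul] <;> ring
    · rw [hu, hu1, one_smul, add_sub_cancel]
      exact right_mem_segment ℝ a b
    · exfalso
      -- b ∈ openSegment a z
      have hu0' : (0:ℝ) < u := by linarith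
      have hune : u ≠ 0 := by linarith
      set s : ℝ := 1 / u with hs
      have hs0 : 0 < s := by positivity
      have hs1 : s < 1 := by rw [hs, div_lt_one hu0']; linarith
      have hseg : b ∈ openSegment ℝ a z := by
        refine ⟨1 - s, s, by linarith, hs0, by ring, ?_⟩
        rw [hu]
        refine pt_ext ?_ ?_ <;>
          simp only [Prod.fst_add, Prod.snd_add, Prod.smul_fst, Prod.smul_snd,
            Prod.fst_sub, Prod.snd_sub, smul_eq_mul, hs] <;>
          field_simp <;> ring
      have hzb := ((mem_extremePoints.1 hbv).2 a haS z hz hseg).2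
      rw [hzb] at hu
      have hc1 := congrArg Prod.fst hu
      have hc2 := congrArg Prod.snd hu
      simp only [Prod.fst_add, Prod.snd_add, Prod.smul_fst, Prod.smul_snd,
        Prod.fst_sub, Prod.snd_sub, smul_eq_mul] at hc1 hc2
      have e1 : (b.1 - a.1) * (1 - u) = 0 := by linear_combination hc1
      have e2 : (b.2 - a.2) * (1 - u) = 0 := by linear_combination hc2
      have hune1 : (1:ℝ) - u ≠ 0 := by linarith
      have f1 : b.1 = a.1 := by
        rcases mul_eq_zero.1 e1 with h' | h'
        · linarith
        · exact absurd h' hune1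
      have f2 : b.2 = a.2 := by
        rcases mul_eq_zero.1 e2 with h' | h'
        · linarith
        · exact absurd h' hune1
      exact hab (pt_ext f1 f2).symm

lemma det3_combo (a b x y : Pt) (t : ℝ) :
    det3 a b ((1 - t) • x + t • y) = (1 - t) * det3 a b x + t * det3 a b y := by
  simp only [det3, Prod.fst_add, Prod.snd_add, Prod.smul_fst, Prod.smul_snd, smul_eq_mul]
  ring

lemma edgeList_prefix : ∀ (M N : List Pt), ∀ e ∈ edgeList M, e ∈ edgeList (M ++ N)
  | [], _, e, he => by simp [edgeList] at he
  | [x], _, e, he => by simp [edgeList] at he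
  | x :: y :: M, N, e, he => by
      have h1 : edgeList (x :: y :: M) = (x, y) :: edgeList (y :: M) := rfl
      have h2 : edgeList ((x :: y :: M) ++ N) = (x, y) :: edgeList ((y :: M) ++ N) := rfl
      rw [h1] at he
      rw [h2]
      rcases List.mem_cons.1 he with h | h
      · exact List.mem_cons.2 (Or.inl h)
      · exact List.mem_cons.2 (Or.inr (edgeList_prefix (y :: M) N e h))

lemma edgeList_cons (x : Pt) (L : List Pt) : ∀ e ∈ edgeList L, e ∈ edgeList (x :: L) := by
  intro e he
  cases L with
  | nil => simp [edgeList] at he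
  | cons y L' =>
    have h : edgeList (x :: y :: L') = (x, y) :: edgeList (y :: L') := rfl
    rw [h]
    exact List.mem_cons.2 (Or.inr he)

lemma edgeList_suffix : ∀ (M N : List Pt), ∀ e ∈ edgeList N, e ∈ edgeList (M ++ N)
  | [], _, e, he => he
  | x :: M, N, e, he => edgeList_cons x (M ++ N) e (edgeList_suffix M N e he)

lemma mem_of_mem_edgeList {e : Pt × Pt} {M : List Pt} (he : e ∈ edgeList M) :
    e.1 ∈ M ∧ e.2 ∈ M := by
  obtain ⟨x, y⟩ := e
  have h := List.of_mem_zip he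
  exact ⟨h.1, List.mem_of_mem_tail h.2⟩

lemma edge_split : ∀ {l : List Pt} {a b : Pt}, (a, b) ∈ edgeList l →
    ∃ P Q, l = P ++ a :: b :: Q := by
  intro l
  induction l with
  | nil => intro a b h; simp [edgeList] at h
  | cons x xs ih =>
    intro a b h
    cases xs with
    | nil => simp [edgeList] at h
    | cons y xs' =>
      have hrw : edgeList (x :: y :: xs') = (x, y) :: edgeList (y :: xs') := rfl
      rw [hrw] at h
      rcases List.mem_cons.1 h with h | h
      · obtain ⟨h1, h2⟩ := Prod.ext_iff.1 h
        exact ⟨[], xs', by simp at h1 h2; simp [← h1, ← h2]⟩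
      · obtain ⟨P, Q, hPQ⟩ := ih h
        exact ⟨x :: P, Q, by simp [hPQ]⟩

lemma same_sign (f : Pt → ℝ) : ∀ (M : List Pt), (∀ x ∈ M, f x ≠ 0) →
    (∀ e ∈ edgeList M, 0 ≤ f e.1 * f e.2) → ∀ x ∈ M, ∀ y ∈ M, 0 < f x * f y
  | [], _, _, x, hx, _, _ => by simp at hx
  | [w], hnz, _, x, hx, y, hy => by
      have hxw : x = w := by simpa using hx
      have hyw : y = w := by simpa using hy
      rw [hxw, hyw]
      exact mul_self_pos.2 (hnz w (by simp))
  | w :: v :: M, hnz, hedge, x, hx, y, hy => by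
      have hrw : edgeList (w :: v :: M) = (w, v) :: edgeList (v :: M) := rfl
      have hwv : 0 ≤ f w * f v := hedge (w, v) (by rw [hrw]; exact List.mem_cons_self)
      have hfw : f w ≠ 0 := hnz w (by simp)
      have hfv : f v ≠ 0 := hnz v (by simp)
      have hwv' : 0 < f w * f v := lt_of_le_of_ne hwv (by
        intro h; rcases mul_eq_zero.1 h.symm with h' | h' <;> [exact hfw h'; exact hfv h'])
      have ih : ∀ x ∈ v :: M, ∀ y ∈ v :: M, 0 < f x * f y :=
        same_sign f (v :: M) (fun z hz => hnz z (List.mem_cons.2 (Or.inr hz)))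
          (fun e he => hedge e (by rw [hrw]; exact List.mem_cons.2 (Or.inr he)))
      rcases List.mem_cons.1 hx with rfl | hx' <;> rcases List.mem_cons.1 hy with rfl | hy'
      · exact mul_self_pos.2 hfw
      · have h1 := ih v (by simp) y hy'
        nlinarith [mul_pos hwv' h1, mul_self_pos.2 hfv]
      · have h1 := ih v (by simp) x hx'
        nlinarith [mul_pos hwv' h1, mul_self_pos.2 hfv]
      · exact ih x hx' y hy'

/-- Key geometric lemma: no edge of the path other than `ab` crosses the line `ab` strictly. -/
lemma no_strict_crossing {S : Finset Pt} {l : List Pt} {a b x y : Pt}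
    (hl : PlanePath S l) (hab : a ≠ b)
    (hav : a ∈ Set.extremePoints ℝ (convexHull ℝ (S : Set Pt)))
    (hbv : b ∈ Set.extremePoints ℝ (convexHull ℝ (S : Set Pt)))
    (ha : a ∈ S) (hb : b ∈ S)
    (habl : (a, b) ∈ edgeList l) (hxyl : (x, y) ∈ edgeList l)
    (hne : (x, y) ≠ (a, b)) :
    ¬ (det3 a b x * det3 a b y < 0) := by
  intro hcross
  have hfx : det3 a b x ≠ 0 := by intro h; rw [h] at hcross; simp at hcross
  have hfy : det3 a b y ≠ 0 := by intro h; rw [h] at hcross; simp at hcross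
  have hxyS : x ∈ S ∧ y ∈ S := by
    have h1 := mem_of_mem_edgeList hxyl
    have h2 := hl.2.1
    constructor <;>
      · rw [← h2]; exact List.mem_toFinset.2 (by simp_all)
  set fx := det3 a b x with hfxd
  set fy := det3 a b y with hfyd
  have hd : fx - fy ≠ 0 := by
    intro h
    have h2 : fx = fy := by linarith
    rw [h2] at hcross
    nlinarith
  set t : ℝ := fx / (fx - fy) with ht
  have ht0 : 0 < t := by
    rcases mul_neg_iff.1 hcross with ⟨h1, h2⟩ | ⟨h1, h2⟩
    · exact div_pos h1 (by linarith)
    · exact div_pos_of_neg_of_neg h1 (by linarith)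
  have ht1 : t < 1 := by
    rcases mul_neg_iff.1 hcross with ⟨h1, h2⟩ | ⟨h1, h2⟩
    · rw [ht, div_lt_one (by linarith)]; linarith
    · rw [ht, div_lt_one_of_neg (by linarith)]; linarith
  set z : Pt := (1 - t) • x + t • y with hz
  have hdz : det3 a b z = 0 := by
    rw [hz, det3_combo, ← hfxd, ← hfyd, ht]
    field_simp
    ring
  have hzseg : z ∈ segment ℝ x y := ⟨1 - t, t, by linarith, by linarith, by ring, rfl⟩
  have hzhull : z ∈ convexHull ℝ (S : Set Pt) :=
    (convex_convexHull ℝ _).segment_subset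
      (subset_convexHull ℝ _ (by exact_mod_cast hxyS.1))
      (subset_convexHull ℝ _ (by exact_mod_cast hxyS.2)) hzseg
  have hzab : z ∈ segment ℝ a b := mem_segment_of_det_zero ha hb hab hav hbv hzhull hdz
  have hmem := hl.2.2 (x, y) hxyl (a, b) habl hne ⟨hzseg, hzab⟩
  have hxy : z = x ∨ z = y := by
    have := hmem.1
    simpa using this
  rcases hxy with h | h
  · exact hfx (by rw [hfxd, ← h]; exact hdz)
  · exact hfy (by rw [hfyd, ← h]; exact hdz)

lemma getLast?_mem_suffix {M Q : List Pt} {t : Pt} (hQ : Q ≠ [])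
    (h : (M ++ Q).getLast? = some t) : t ∈ Q := by
  rw [List.getLast?_append, List.getLast?_eq_getLast hQ] at h
  simp only [Option.some_or] at h
  obtain rfl : Q.getLast hQ = t := by injection h
  exact List.getLast_mem hQ

lemma core {S : Finset Pt} (hgp : GenPos S)
    {a b : Pt} (ha : a ∈ S) (hb : b ∈ S) (hab : a ≠ b)
    (hav : a ∈ Set.extremePoints ℝ (convexHull ℝ (S : Set Pt)))
    (hbv : b ∈ Set.extremePoints ℝ (convexHull ℝ (S : Set Pt)))
    (hup : ∃ p ∈ S, 0 < det3 a b p) (hdown : ∃ p ∈ S, det3 a b p < 0)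
    {s t : Pt} (hside : 0 ≤ det3 a b s * det3 a b t)
    {l : List Pt} (hl : PlanePath S l) (hhead : l.head? = some s)
    (hlast : l.getLast? = some t) (habl : (a, b) ∈ edgeList l) : False := by
  obtain ⟨P, Q, rfl⟩ := edge_split habl
  set f : Pt → ℝ := det3 a b with hf
  have hnd := hl.1
  rw [List.nodup_append] at hnd
  obtain ⟨hndP, hndR, hdisj⟩ := hnd
  have haP : a ∉ P := fun h => hdisj a h a (by simp) rfl
  have hbP : b ∉ P := fun h => hdisj b h b (by simp) rfl
  have hndR' := hndR
  rw [List.nodup_cons] at hndR'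
  have haQ : a ∉ Q := fun h => hndR'.1 (by simp [h])
  have hbQ : b ∉ Q := by
    have h := hndR'.2
    rw [List.nodup_cons] at h
    exact h.1
  have hmemS : ∀ x ∈ P ++ a :: b :: Q, x ∈ S := by
    intro x hx
    rw [← hl.2.1]
    exact List.mem_toFinset.2 hx
  have hnzP : ∀ x ∈ P, f x ≠ 0 := fun x hx =>
    det3_ne_zero_of_genpos hgp ha hb (hmemS x (by simp [hx])) hab
      (fun h => haP (h ▸ hx)) (fun h => hbP (h ▸ hx))
  have hnzQ : ∀ x ∈ Q, f x ≠ 0 := fun x hx =>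
    det3_ne_zero_of_genpos hgp ha hb (hmemS x (by simp [hx])) hab
      (fun h => haQ (h ▸ hx)) (fun h => hbQ (h ▸ hx))
  have hsP : ∀ x ∈ P, ∀ y ∈ P, 0 < f x * f y := by
    apply same_sign f P hnzP
    intro e he
    by_contra hneg
    push_neg at hneg
    have hneg' : f e.1 * f e.2 < 0 := hneg
    have he' : (e.1, e.2) ∈ edgeList (P ++ a :: b :: Q) := by
      have := edgeList_prefix P (a :: b :: Q) e he
      simpa using this
    have h1 := mem_of_mem_edgeList he
    have hne : (e.1, e.2) ≠ (a, b) := by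
      intro h
      have h' : e.1 = a := (Prod.ext_iff.1 h).1
      exact haP (h' ▸ h1.1)
    exact no_strict_crossing hl hab hav hbv ha hb habl he' hne hneg'
  have hsQ : ∀ x ∈ Q, ∀ y ∈ Q, 0 < f x * f y := by
    apply same_sign f Q hnzQ
    intro e he
    by_contra hneg
    push_neg at hneg
    have hneg' : f e.1 * f e.2 < 0 := hneg
    have he' : (e.1, e.2) ∈ edgeList (P ++ a :: b :: Q) := by
      have := edgeList_suffix P (a :: b :: Q) e
        (edgeList_cons a (b :: Q) e (edgeList_cons b Q e he))
      simpa using this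
    have h1 := mem_of_mem_edgeList he
    have hne : (e.1, e.2) ≠ (a, b) := by
      intro h
      have h' : e.1 = a := (Prod.ext_iff.1 h).1
      exact haQ (h' ▸ h1.1)
    exact no_strict_crossing hl hab hav hbv ha hb habl he' hne hneg'
  obtain ⟨p, hpS, hp⟩ := hup
  obtain ⟨q, hqS, hq⟩ := hdown
  have hfa : f a = 0 := det3_self_left a b
  have hfb : f b = 0 := det3_self_right a b
  have hmem : ∀ r : Pt, r ∈ S → f r ≠ 0 → r ∈ P ∨ r ∈ Q := by
    intro r hrS hfr
    have hrl : r ∈ P ++ a :: b :: Q := by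
      rw [← List.mem_toFinset, hl.2.1]; exact hrS
    simp only [List.mem_append, List.mem_cons] at hrl
    rcases hrl with h | h | h | h
    · exact Or.inl h
    · exact absurd (h ▸ hfa) hfr
    · exact absurd (h ▸ hfb) hfr
    · exact Or.inr h
  have hpPQ := hmem p hpS (by intro h; rw [h] at hp; exact lt_irrefl 0 hp)
  have hqPQ := hmem q hqS (by intro h; rw [h] at hq; exact lt_irrefl 0 hq)
  -- the positive and negative witnesses cannot lie in the same part
  have hPne : P ≠ [] ∧ Q ≠ [] := by
    constructor
    · rcases hpPQ with h | h
      · intro h0; rw [h0] at h; simp at h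
      · rcases hqPQ with h' | h'
        · intro h0; rw [h0] at h'; simp at h'
        · exfalso; have := hsQ p h q h'; nlinarith
    · rcases hpPQ with h | h
      · rcases hqPQ with h' | h'
        · exfalso; have := hsP p h q h'; nlinarith
        · intro h0; rw [h0] at h'; simp at h'
      · intro h0; rw [h0] at h; simp at h
  -- s is the head of P, t is the last of Q
  obtain ⟨c, P', rfl⟩ := List.exists_cons_of_ne_nil hPne.1
  have hsc : s = c := by
    simp only [List.cons_append, List.head?_cons] at hhead
    injection hhead with h; exact h.symm
  have hsP' : s ∈ c :: P' := by rw [hsc]; simp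
  have htQ : t ∈ Q := by
    apply getLast?_mem_suffix hPne.2 (M := (c :: P') ++ [a, b])
    simpa using hlast
  -- conclude
  have hps : p ∈ c :: P' ∨ p ∈ Q := hpPQ
  have hqs : q ∈ c :: P' ∨ q ∈ Q := hqPQ
  rcases hps with hpP | hpQ <;> rcases hqs with hqP | hqQ
  · have := hsP p hpP q hqP; nlinarith
  · have h1 := hsP s hsP' p hpP
    have h2 := hsQ t htQ q hqQ
    have hfs : 0 < f s := by nlinarith
    have hft : f t < 0 := by nlinarith
    nlinarith
  · have h1 := hsP s hsP' q hqP
    have h2 := hsQ t htQ p hpQ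
    have hfs : f s < 0 := by nlinarith
    have hft : 0 < f t := by nlinarith
    nlinarith
  · have := hsQ p hpQ q hqQ; nlinarith

/-- If `a, b` are non-consecutive hull vertices (both open halfplanes of the
line `ab` contain points of `S`) and `s, t` lie in the same closed halfplane of `ℓ(ab)`,
then no plane Hamiltonian path with endpoints `s, t` contains the segment `ab` as an edge. -/
theorem stmt_4 (S : Finset Pt) (hgp : GenPos S)
    (a b : Pt) (ha : a ∈ S) (hb : b ∈ S) (hab : a ≠ b)
    (hav : HullVertex S a) (hbv : HullVertex S b)
    (hup : ∃ p ∈ S, 0 < det3 a b p) (hdown : ∃ p ∈ S, det3 a b p < 0)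
    (s t : Pt) (hs : s ∈ S) (ht : t ∈ S)
    (hside : 0 ≤ det3 a b s * det3 a b t) :
    ¬ ∃ l : List Pt, PlanePath S l ∧ l.head? = some s ∧ l.getLast? = some t ∧
      IsEdgeOf a b l := by
  rintro ⟨l, hl, hhead, hlast, hedge⟩
  rcases hedge with h | h
  · exact core hgp ha hb hab hav hbv hup hdown hside hl hhead hlast h
  · apply core hgp hb ha (Ne.symm hab) hbv hav ?_ ?_ ?_ hl hhead hlast h
    · obtain ⟨p, hpS, hp⟩ := hdown
      exact ⟨p, hpS, by rw [det3_swap]; linarith⟩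
    · obtain ⟨p, hpS, hp⟩ := hup
      exact ⟨p, hpS, by rw [det3_swap]; linarith⟩
    · have h1 : det3 b a s = - det3 a b s := det3_swap a b s
      have h2 : det3 b a t = - det3 a b t := det3_swap a b t
      rw [h1, h2]
      nlinarith [hside]
end
end

section
/- Let S_down and S_up be two finite point sets in the plane, with S_down ∪ S_up in general position, such that |S_down| ≤ |S_up| ≤ |S_down| + 1 and there is a line separating S_down from S_up. Let z ∈ S_up be a vertex of the boundary of the convex hull of S_down ∪ S_up that is adjacent on that boundary to a vertex from S_down. Then there exists a plane Hamiltonian path on S_down ∪ S_up starting at z such that every edge of the path has one endpoint in S_down and one endpoint in S_up. -/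
open Set
open scoped Classical

noncomputable section

/- ===== auxiliary lemmas ===== -/


lemma det3_affine (x y a b : Pt) (α β : ℝ) (hab : α + β = 1) :
    det3 x y (α • a + β • b) = α * det3 x y a + β * det3 x y b := by
  have hβ : β = 1 - α := by linarith
  subst hβ
  simp only [det3, Prod.fst_add, Prod.snd_add, Prod.smul_fst, Prod.smul_snd, smul_eq_mul]
  ring

lemma det3_id1 (x y : Pt) : det3 x y x = 0 := by simp only [det3]; ring
lemma det3_id2 (x y : Pt) : det3 x y y = 0 := by simp only [det3]; ring

lemma collinear_of_det3 (p q r : Pt) (h : det3 p q r = 0) : Collinear ℝ ({p, q, r} : Set Pt) := by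
  rcases eq_or_ne p q with rfl | hpq
  · have : ({p, p, r} : Set Pt) = {p, r} := by simp
    rw [this]; exact collinear_pair ℝ p r
  · apply (collinear_iff_of_mem (show p ∈ ({p,q,r} : Set Pt) by simp)).2
    refine ⟨q - p, fun x hx => ?_⟩
    simp only [Set.mem_insert_iff, Set.mem_singleton_iff] at hx
    have key : ∀ x : Pt, det3 p q x = 0 → ∃ r : ℝ, x = r • (q - p) +ᵥ p := by
      intro x hx0
      simp only [det3] at hx0
      rcases eq_or_ne q.1 p.1 with h1 | h1
      · have h2 : q.2 ≠ p.2 := fun h2 => hpq ((Prod.ext h1 h2).symm)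
        refine ⟨(x.2 - p.2)/(q.2 - p.2), ?_⟩
        have h2' : q.2 - p.2 ≠ 0 := sub_ne_zero.mpr h2
        have hx1 : x.1 = p.1 := by
          have : (q.2 - p.2) * (x.1 - p.1) = 0 := by rw [h1] at hx0; linarith
          rcases mul_eq_zero.mp this with h' | h'
          · exact absurd h' h2'
          · linarith
        apply Prod.ext
        · simp only [vadd_eq_add, Prod.fst_add, Prod.smul_fst, Prod.fst_sub, smul_eq_mul]
          rw [h1, hx1]; ring
        · simp only [vadd_eq_add, Prod.snd_add, Prod.smul_snd, Prod.snd_sub, smul_eq_mul]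
          field_simp
          ring
      · refine ⟨(x.1 - p.1)/(q.1 - p.1), ?_⟩
        have h1' : q.1 - p.1 ≠ 0 := sub_ne_zero.mpr h1
        apply Prod.ext
        · simp only [vadd_eq_add, Prod.fst_add, Prod.smul_fst, Prod.fst_sub, smul_eq_mul]
          field_simp
          ring
        · simp only [vadd_eq_add, Prod.snd_add, Prod.smul_snd, Prod.snd_sub, smul_eq_mul]
          field_simp
          nlinarith [hx0]
    rcases hx with rfl | rfl | hx3
    · exact ⟨0, by simp⟩
    · exact ⟨1, by simp⟩
    · exact hx3 ▸ key r h


lemma edgeList_nil : edgeList [] = [] := rfl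
lemma edgeList_single (a : Pt) : edgeList [a] = [] := rfl
lemma edgeList_cons₂ (a b : Pt) (l : List Pt) :
    edgeList (a :: b :: l) = (a, b) :: edgeList (b :: l) := rfl

lemma mem_of_mem_edgeList_s6 : ∀ {l : List Pt} {x y : Pt}, (x, y) ∈ edgeList l → x ∈ l ∧ y ∈ l := by
  intro l
  induction l with
  | nil => intro x y h; simp [edgeList] at h
  | cons a t ih =>
    intro x y h
    cases t with
    | nil => simp [edgeList] at h
    | cons b t2 =>
      rw [edgeList_cons₂] at h
      rcases List.mem_cons.mp h with h1 | h2
      · obtain ⟨rfl, rfl⟩ := Prod.mk.inj h1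
        exact ⟨List.mem_cons_self, List.mem_cons_of_mem _ (List.mem_cons_self)⟩
      · obtain ⟨hx, hy⟩ := ih h2
        exact ⟨List.mem_cons_of_mem _ hx, List.mem_cons_of_mem _ hy⟩

lemma ne_of_mem_edgeList : ∀ {l : List Pt}, l.Nodup → ∀ {x y : Pt}, (x, y) ∈ edgeList l → x ≠ y := by
  intro l
  induction l with
  | nil => intro _ x y h; simp [edgeList] at h
  | cons a t ih =>
    intro hnd x y h
    cases t with
    | nil => simp [edgeList] at h
    | cons b t2 =>
      rw [edgeList_cons₂] at h
      rcases List.mem_cons.mp h with h1 | h2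
      · obtain ⟨rfl, rfl⟩ := Prod.mk.inj h1
        intro hxy
        exact (List.nodup_cons.mp hnd).1 (hxy ▸ List.mem_cons_self)
      · exact ih (List.nodup_cons.mp hnd).2 h2

lemma QQ (A B : ℝ) (x y P Y : Pt) :
    (A^2+B^2) * (det3 x y P - det3 x y Y) =
      ((B*P.1-A*P.2) - (B*Y.1-A*Y.2)) * ((A*x.1+B*x.2) - (A*y.1+B*y.2)) +
      ((A*P.1+B*P.2) - (A*Y.1+B*Y.2)) * ((B*y.1-A*y.2) - (B*x.1-A*x.2)) := by
  simp only [det3]; ring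

lemma pos_of_mul_pos_right' {a b : ℝ} (h : 0 < a * b) (hb : 0 < b) : 0 < a := by
  by_contra h'; push_neg at h'; nlinarith

lemma neg_of_mul_neg_right' {a b : ℝ} (h : a * b < 0) (hb : 0 < b) : a < 0 := by
  by_contra h'; push_neg at h'; nlinarith

lemma det3_ne_of_genpos {S : Finset Pt} (hS : GenPos S) {p q r : Pt}
    (hp : p ∈ S) (hq : q ∈ S) (hr : r ∈ S) (h1 : p ≠ q) (h2 : p ≠ r) (h3 : q ≠ r) :
    det3 p q r ≠ 0 := fun h => hS p hp q hq r hr h1 h2 h3 (collinear_of_det3 p q r h)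

/-- crossing point of segment `ab` with the line `f = c`. -/
def Xpt (f : Pt →ₗ[ℝ] ℝ) (c : ℝ) (a b : Pt) : Pt :=
  ((f b - c) / (f b - f a)) • a + ((c - f a) / (f b - f a)) • b

lemma Xpt_det (f : Pt →ₗ[ℝ] ℝ) (c : ℝ) (a b : Pt) (ha : f a < c) (hb : c < f b) (x y : Pt) :
    det3 x y (Xpt f c a b) * (f b - f a) = (f b - c) * det3 x y a + (c - f a) * det3 x y b := by
  have hden : f b - f a ≠ 0 := by linarith
  rw [Xpt, det3_affine x y a b _ _ (by field_simp; ring)]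
  field_simp
  try ring

lemma Xpt_f (f : Pt →ₗ[ℝ] ℝ) (c : ℝ) (a b : Pt) (ha : f a < c) (hb : c < f b) :
    f (Xpt f c a b) = c := by
  have hden : f b - f a ≠ 0 := by linarith
  simp only [Xpt, map_add, map_smul, smul_eq_mul]
  field_simp
  try ring

set_option maxHeartbeats 1000000 in
theorem key_step (D U : Finset Pt) (f : Pt →ₗ[ℝ] ℝ) (c : ℝ)
    (hD : ∀ p ∈ D, f p < c) (hU : ∀ q ∈ U, c < f q)
    (hgp : GenPos (D ∪ U)) (z : Pt) (hz : z ∈ U) (w : Pt) (hw : w ∈ D)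
    (hzw : IsHullEdge (D ∪ U) z w) (hU' : (U.erase z).Nonempty) :
    ∃ d u', d ∈ D ∧ u' ∈ U.erase z ∧ ∃ ρ : ℝ,
      (∀ p ∈ D ∪ U, p ≠ z → p ≠ d → p ≠ u' → 0 < ρ * det3 d u' p) ∧
      ρ * det3 d u' z < 0 := by
  obtain ⟨hzS, hwS, hzwne, hsig⟩ := hzw
  have hwc : f w < c := hD w hw
  have hzc : c < f z := hU z hz
  obtain ⟨ε, hεne, hε⟩ : ∃ ε : ℝ, ε ≠ 0 ∧ ∀ p ∈ D ∪ U, p ≠ z → p ≠ w → 0 < ε * det3 z w p := by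
    rcases hsig with h | h
    · exact ⟨1, one_ne_zero, fun p hp h1 h2 => by simpa using h p hp h1 h2⟩
    · exact ⟨-1, by norm_num, fun p hp h1 h2 => by have := h p hp h1 h2; linarith⟩
  set A : ℝ := f (1, 0) with hAdef
  set B : ℝ := f (0, 1) with hBdef
  have hf : ∀ p : Pt, f p = A * p.1 + B * p.2 := by
    intro p
    have hp : (p : Pt) = p.1 • ((1:ℝ), (0:ℝ)) + p.2 • ((0:ℝ), (1:ℝ)) := by
      apply Prod.ext <;> simp
    conv_lhs => rw [hp]
    rw [map_add, map_smul, map_smul, smul_eq_mul, smul_eq_mul, ← hAdef, ← hBdef]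
    ring
  have hQ : 0 < A ^ 2 + B ^ 2 := by
    rcases eq_or_ne A 0 with hA0 | hA0
    · rcases eq_or_ne B 0 with hB0 | hB0
      · exfalso
        have h1 := hf w; have h2 := hf z
        rw [hA0, hB0] at h1 h2
        simp at h1 h2
        rw [h1] at hwc; rw [h2] at hzc; linarith
      · positivity
    · positivity
  have DICT : ∀ x y P Y : Pt, f P = c → f Y = c → det3 x y Y = 0 →
      (A^2+B^2) * det3 x y P = ((B*P.1-A*P.2) - (B*Y.1-A*Y.2)) * (f x - f y) := by
    intro x y P Y hP hY h0
    have h5 := QQ A B x y P Y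
    have e1 : A * x.1 + B * x.2 = f x := (hf x).symm
    have e2 : A * y.1 + B * y.2 = f y := (hf y).symm
    have e3 : A * P.1 + B * P.2 = f P := (hf P).symm
    have e4 : A * Y.1 + B * Y.2 = f Y := (hf Y).symm
    rw [e1, e2, e3, e4, hP, hY, h0] at h5
    linarith [h5]
  have hXzw0 : det3 z w (Xpt f c w z) = 0 := by
    have hid2 := Xpt_det f c w z hwc hzc z w
    rw [det3_id1, det3_id2] at hid2
    have hden2 : f z - f w ≠ 0 := by linarith
    have h0 : det3 z w (Xpt f c w z) * (f z - f w) = 0 := by linarith [hid2]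
    rcases mul_eq_zero.mp h0 with h' | h'
    · exact h'
    · exact absurd h' hden2
  have step1 : ∀ d ∈ D, ∀ u ∈ U.erase z,
      ε * (B*(Xpt f c w z).1 - A*(Xpt f c w z).2) < ε * (B*(Xpt f c d u).1 - A*(Xpt f c d u).2) := by
    intro d hd u hu
    obtain ⟨huz, huU⟩ := Finset.mem_erase.mp hu
    have hdc : f d < c := hD d hd
    have huc : c < f u := hU u huU
    have hdz : d ≠ z := fun h => by rw [h] at hdc; linarith
    have hdS : d ∈ D ∪ U := Finset.mem_union_left _ hd
    have huS : u ∈ D ∪ U := Finset.mem_union_right _ huU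
    have huw : u ≠ w := fun h => by rw [h] at huc; linarith
    have h1 : 0 ≤ ε * det3 z w d := by
      rcases eq_or_ne d w with rfl | hdw
      · rw [det3_id2]; simp
      · exact le_of_lt (hε d hdS hdz hdw)
    have h2 : 0 < ε * det3 z w u := hε u huS huz huw
    have hden : (0:ℝ) < f u - f d := by linarith
    have hid := Xpt_det f c d u hdc huc z w
    have h3' : ε * det3 z w (Xpt f c d u) * (f u - f d)
        = (f u - c) * (ε * det3 z w d) + (c - f d) * (ε * det3 z w u) := by
      linear_combination ε * hid
    have t1 : 0 ≤ (f u - c) * (ε * det3 z w d) := mul_nonneg (by linarith) h1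
    have t2 : 0 < (c - f d) * (ε * det3 z w u) := mul_pos (by linarith) h2
    have h3 : 0 < ε * det3 z w (Xpt f c d u) :=
      pos_of_mul_pos_right' (by rw [h3']; linarith) hden
    have hdic := DICT z w (Xpt f c d u) (Xpt f c w z)
      (Xpt_f f c d u hdc huc) (Xpt_f f c w z hwc hzc) hXzw0
    have hfzw : (0:ℝ) < f z - f w := by linarith
    have e5 : (A^2+B^2) * (ε * det3 z w (Xpt f c d u))
        = (ε * (B*(Xpt f c d u).1 - A*(Xpt f c d u).2)
           - ε * (B*(Xpt f c w z).1 - A*(Xpt f c w z).2)) * (f z - f w) := by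
      linear_combination ε * hdic
    have h6 : 0 < (ε * (B*(Xpt f c d u).1 - A*(Xpt f c d u).2)
           - ε * (B*(Xpt f c w z).1 - A*(Xpt f c w z).2)) :=
      pos_of_mul_pos_right' (by rw [← e5]; exact mul_pos hQ h3) hfzw
    linarith
  obtain ⟨u₁, hu₁⟩ := hU'
  have hPne : (D ×ˢ U.erase z).Nonempty := ⟨(w, u₁), Finset.mem_product.mpr ⟨hw, hu₁⟩⟩
  obtain ⟨du, hdu, hmin⟩ := Finset.exists_min_image (D ×ˢ U.erase z)
    (fun pr => ε * (B*(Xpt f c pr.1 pr.2).1 - A*(Xpt f c pr.1 pr.2).2)) hPne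
  obtain ⟨hd0, hu0⟩ := Finset.mem_product.mp hdu
  obtain ⟨hu'z, hu'U⟩ := Finset.mem_erase.mp hu0
  have hdc : f du.1 < c := hD _ hd0
  have huc : c < f du.2 := hU _ hu'U
  have hd_ne_u : du.1 ≠ du.2 := fun h => by rw [h] at hdc; linarith
  have hsqpos : (0:ℝ) < (f du.1 - f du.2)^2 := by nlinarith
  have hρne : ε * (f du.1 - f du.2) ≠ 0 := mul_ne_zero hεne (by intro h; nlinarith)
  have hY0' : det3 du.1 du.2 (Xpt f c du.1 du.2) = 0 := by
    have hid2 := Xpt_det f c du.1 du.2 hdc huc du.1 du.2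
    rw [det3_id1, det3_id2] at hid2
    have hden2 : f du.2 - f du.1 ≠ 0 := by intro h; nlinarith
    have h0 : det3 du.1 du.2 (Xpt f c du.1 du.2) * (f du.2 - f du.1) = 0 := by linarith [hid2]
    rcases mul_eq_zero.mp h0 with h' | h'
    · exact h'
    · exact absurd h' hden2
  have dagger : ∀ P : Pt, f P = c →
      (A^2+B^2) * ((ε * (f du.1 - f du.2)) * det3 du.1 du.2 P) =
      (f du.1 - f du.2)^2 *
        ((ε * (B*P.1 - A*P.2)) - (ε * (B*(Xpt f c du.1 du.2).1 - A*(Xpt f c du.1 du.2).2))) := by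
    intro P hPc
    have hdic := DICT du.1 du.2 P (Xpt f c du.1 du.2) hPc (Xpt_f f c du.1 du.2 hdc huc) hY0'
    linear_combination (ε * (f du.1 - f du.2)) * hdic
  have hdS : du.1 ∈ D ∪ U := Finset.mem_union_left _ hd0
  have hu'S : du.2 ∈ D ∪ U := Finset.mem_union_right _ hu'U
  have claimA : ∀ p ∈ D ∪ U, p ≠ z → p ≠ du.1 → p ≠ du.2 →
      0 < (ε * (f du.1 - f du.2)) * det3 du.1 du.2 p := by
    intro p hpS hpz hpd hpu
    have hne : det3 du.1 du.2 p ≠ 0 :=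
      det3_ne_of_genpos hgp hdS hu'S hpS hd_ne_u (Ne.symm hpd) (Ne.symm hpu)
    have hprodne : (ε * (f du.1 - f du.2)) * det3 du.1 du.2 p ≠ 0 := mul_ne_zero hρne hne
    rcases hprodne.lt_or_gt with hneg | hpos
    swap
    · exact hpos
    exfalso
    rcases Finset.mem_union.mp hpS with hpD | hpU
    · have hpc : f p < c := hD p hpD
      have hid := Xpt_det f c p du.2 hpc huc du.1 du.2
      rw [det3_id2] at hid
      have hdenp : (0:ℝ) < f du.2 - f p := by linarith
      have h7 : (ε * (f du.1 - f du.2)) * det3 du.1 du.2 (Xpt f c p du.2) * (f du.2 - f p)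
          = (f du.2 - c) * ((ε * (f du.1 - f du.2)) * det3 du.1 du.2 p) := by
        linear_combination (ε * (f du.1 - f du.2)) * hid
      have hXneg : (ε * (f du.1 - f du.2)) * det3 du.1 du.2 (Xpt f c p du.2) < 0 := by
        apply neg_of_mul_neg_right' _ hdenp
        rw [h7]
        exact mul_neg_of_pos_of_neg (by linarith) hneg
      have hdag := dagger (Xpt f c p du.2) (Xpt_f f c p du.2 hpc huc)
      have hmin' := hmin (p, du.2) (Finset.mem_product.mpr ⟨hpD, hu0⟩)
      simp only at hmin'
      have hg1 : (A^2+B^2) * ((ε * (f du.1 - f du.2)) * det3 du.1 du.2 (Xpt f c p du.2)) < 0 :=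
        mul_neg_of_pos_of_neg hQ hXneg
      rw [hdag] at hg1
      nlinarith [hsqpos, hmin', hg1]
    · have hpuz : p ∈ U.erase z := Finset.mem_erase.mpr ⟨hpz, hpU⟩
      have hpc : c < f p := hU p hpU
      have hid := Xpt_det f c du.1 p hdc hpc du.1 du.2
      rw [det3_id1] at hid
      have hdenp : (0:ℝ) < f p - f du.1 := by linarith
      have h7 : (ε * (f du.1 - f du.2)) * det3 du.1 du.2 (Xpt f c du.1 p) * (f p - f du.1)
          = (c - f du.1) * ((ε * (f du.1 - f du.2)) * det3 du.1 du.2 p) := by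
        linear_combination (ε * (f du.1 - f du.2)) * hid
      have hXneg : (ε * (f du.1 - f du.2)) * det3 du.1 du.2 (Xpt f c du.1 p) < 0 := by
        apply neg_of_mul_neg_right' _ hdenp
        rw [h7]
        exact mul_neg_of_pos_of_neg (by linarith) hneg
      have hdag := dagger (Xpt f c du.1 p) (Xpt_f f c du.1 p hdc hpc)
      have hmin' := hmin (du.1, p) (Finset.mem_product.mpr ⟨hd0, hpuz⟩)
      simp only at hmin'
      have hg1 : (A^2+B^2) * ((ε * (f du.1 - f du.2)) * det3 du.1 du.2 (Xpt f c du.1 p)) < 0 :=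
        mul_neg_of_pos_of_neg hQ hXneg
      rw [hdag] at hg1
      nlinarith [hsqpos, hmin', hg1]
  have claimB : (ε * (f du.1 - f du.2)) * det3 du.1 du.2 z < 0 := by
    have hzd : z ≠ du.1 := fun h => by rw [h] at hzc; linarith
    have hzu : z ≠ du.2 := fun h => (hu'z h.symm).elim
    have hzS' : z ∈ D ∪ U := Finset.mem_union_right _ hz
    have hne : det3 du.1 du.2 z ≠ 0 :=
      det3_ne_of_genpos hgp hdS hu'S hzS' hd_ne_u (Ne.symm hzd) (Ne.symm hzu)
    have hprodne : (ε * (f du.1 - f du.2)) * det3 du.1 du.2 z ≠ 0 := mul_ne_zero hρne hne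
    rcases hprodne.lt_or_gt with hneg | hpos
    · exact hneg
    exfalso
    have hwterm : 0 ≤ (ε * (f du.1 - f du.2)) * det3 du.1 du.2 w := by
      rcases eq_or_ne w du.1 with hwd | hwd
      · rw [hwd, det3_id1]; simp
      · have hwu' : w ≠ du.2 := fun h => by rw [h] at hwc; linarith
        have hwz : w ≠ z := fun h => by rw [h] at hwc; linarith
        exact le_of_lt (claimA w (Finset.mem_union_left _ hw) hwz hwd hwu')
    have hid := Xpt_det f c w z hwc hzc du.1 du.2
    have hdenp : (0:ℝ) < f z - f w := by linarith
    have h7 : (ε * (f du.1 - f du.2)) * det3 du.1 du.2 (Xpt f c w z) * (f z - f w)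
        = (f z - c) * ((ε * (f du.1 - f du.2)) * det3 du.1 du.2 w)
          + (c - f w) * ((ε * (f du.1 - f du.2)) * det3 du.1 du.2 z) := by
      linear_combination (ε * (f du.1 - f du.2)) * hid
    have hXpos : 0 < (ε * (f du.1 - f du.2)) * det3 du.1 du.2 (Xpt f c w z) := by
      apply pos_of_mul_pos_right' _ hdenp
      rw [h7]
      have t1 : 0 ≤ (f z - c) * ((ε * (f du.1 - f du.2)) * det3 du.1 du.2 w) :=
        mul_nonneg (by linarith) hwterm
      have t2 : 0 < (c - f w) * ((ε * (f du.1 - f du.2)) * det3 du.1 du.2 z) :=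
        mul_pos (by linarith) hpos
      linarith
    have hdag := dagger (Xpt f c w z) (Xpt_f f c w z hwc hzc)
    have hs1 := step1 du.1 hd0 du.2 hu0
    have hg1 : 0 < (A^2+B^2) * ((ε * (f du.1 - f du.2)) * det3 du.1 du.2 (Xpt f c w z)) :=
      mul_pos hQ hXpos
    rw [hdag] at hg1
    nlinarith [hsqpos, hs1, hg1]
  exact ⟨du.1, du.2, hd0, hu0, ε * (f du.1 - f du.2), claimA, claimB⟩

lemma genpos_mono {S T : Finset Pt} (hTS : T ⊆ S) (hS : GenPos S) : GenPos T :=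
  fun p hp q hq r hr h1 h2 h3 => hS p (hTS hp) q (hTS hq) r (hTS hr) h1 h2 h3

lemma edgeList_cons₂' (a b : Pt) (l : List Pt) :
    edgeList (a :: b :: l) = (a, b) :: edgeList (b :: l) := rfl

set_option maxHeartbeats 1000000 in
theorem stmt6_aux : ∀ (n : ℕ) (Sdown Sup : Finset Pt),
    Sdown.card + Sup.card ≤ n →
    GenPos (Sdown ∪ Sup) →
    Sdown.card ≤ Sup.card → Sup.card ≤ Sdown.card + 1 →
    (∃ (f : Pt →ₗ[ℝ] ℝ) (c : ℝ), (∀ p ∈ Sdown, f p < c) ∧ (∀ q ∈ Sup, c < f q)) →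
    ∀ z ∈ Sup, (∃ w ∈ Sdown, IsHullEdge (Sdown ∪ Sup) z w) →
    ∃ l : List Pt, PlanePath (Sdown ∪ Sup) l ∧ l.head? = some z ∧
      ∀ e ∈ edgeList l, (e.1 ∈ Sdown ∧ e.2 ∈ Sup) ∨ (e.1 ∈ Sup ∧ e.2 ∈ Sdown) := by
  intro n
  induction n with
  | zero =>
    intro D U hn _ _ _ _ z hz _
    exfalso
    have h1 : U.card ≠ 0 := Finset.card_ne_zero_of_mem hz
    omega
  | succ n ih =>
    intro D U hn hgp hc1 hc2 hsep z hz hzadj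
    obtain ⟨w, hw, hzw⟩ := hzadj
    obtain ⟨f, c, hfD, hfU⟩ := hsep
    have hwc : f w < c := hfD w hw
    have hzc : c < f z := hfU z hz
    have hzw_ne : z ≠ w := fun h => by rw [h] at hzc; linarith
    have hzD : z ∉ D := fun h => by have := hfD z h; linarith
    have hUpos : 1 ≤ U.card := Finset.card_pos.mpr ⟨z, hz⟩
    by_cases hU' : (U.erase z).Nonempty
    · obtain ⟨d, u', hd, hu', ρ, hA, hB⟩ := key_step D U f c hfD hfU hgp z hz w hw hzw hU'
      obtain ⟨hu'z, hu'U⟩ := Finset.mem_erase.mp hu'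
      have hdc : f d < c := hfD d hd
      have hu'c : c < f u' := hfU u' hu'U
      have hd_ne_u : d ≠ u' := fun h => by rw [h] at hdc; linarith
      have hset : ∀ p : Pt, p ∈ U.erase z ∪ D ↔ (p ∈ D ∪ U ∧ p ≠ z) := by
        intro p
        simp only [Finset.mem_union, Finset.mem_erase]
        constructor
        · rintro (⟨h1, h2⟩ | h1)
          · exact ⟨Or.inr h2, h1⟩
          · exact ⟨Or.inl h1, fun h => hzD (h ▸ h1)⟩
        · rintro ⟨h1 | h1, h2⟩
          · exact Or.inr h1
          · exact Or.inl ⟨h2, h1⟩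
      have hρne : ρ ≠ 0 := by
        intro h; rw [h, zero_mul] at hB; exact absurd hB (lt_irrefl 0)
      have hhull : IsHullEdge (U.erase z ∪ D) d u' := by
        refine ⟨(hset d).mpr ⟨Finset.mem_union_left _ hd, fun h => by rw [h] at hdc; linarith⟩,
          Finset.mem_union_left _ hu', hd_ne_u, ?_⟩
        rcases hρne.lt_or_gt with hρneg | hρpos
        · right
          intro p hp hpd hpu
          have hp' := (hset p).mp hp
          have := hA p hp'.1 hp'.2 hpd hpu
          nlinarith
        · left
          intro p hp hpd hpu
          have hp' := (hset p).mp hp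
          have := hA p hp'.1 hp'.2 hpd hpu
          nlinarith
      have hcarde : (U.erase z).card = U.card - 1 := Finset.card_erase_of_mem hz
      have hrec := ih (U.erase z) D
        (by omega)
        (genpos_mono (fun p hp => ((hset p).mp hp).1) hgp)
        (by omega)
        (by omega)
        ⟨-f, -c, fun p hp => by
            have := hfU p (Finset.mem_of_mem_erase hp); simp; linarith,
          fun q hq => by have := hfD q hq; simp; linarith⟩
        d hd
        ⟨u', hu', hhull⟩
      obtain ⟨l', hPP', hhead', hbi'⟩ := hrec
      obtain ⟨hnd', htf', hpl'⟩ := hPP'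
      cases l' with
      | nil => simp at hhead'
      | cons h0 t =>
      have hh0 : d = h0 := by symm; simpa using hhead'
      subst hh0
      have hmem_l' : ∀ p : Pt, p ∈ (d :: t) → (p ∈ D ∪ U ∧ p ≠ z) := by
        intro p hp
        have : p ∈ (U.erase z ∪ D) := htf' ▸ List.mem_toFinset.mpr hp
        exact (hset p).mp this
      have hzl' : z ∉ (d :: t) := fun h => (hmem_l' z h).2 rfl
      have htail_nonneg : ∀ p ∈ (d :: t), 0 ≤ ρ * det3 d u' p := by
        intro p hp
        obtain ⟨hpS, hpz⟩ := hmem_l' p hp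
        rcases eq_or_ne p d with rfl | hpd
        · rw [det3_id1]; simp
        rcases eq_or_ne p u' with rfl | hpu
        · rw [det3_id2]; simp
        exact le_of_lt (hA p hpS hpz hpd hpu)
      have hmixed : ∀ a b : Pt, (a, b) ∈ edgeList (d :: t) →
          segment ℝ z d ∩ segment ℝ a b ⊆ (({z, d} : Set Pt) ∩ {a, b}) := by
        rintro a b hab x ⟨hx1, hx2⟩
        obtain ⟨α, β, hα, hβ, hαβ, hxe⟩ := hx1
        obtain ⟨s, t', hs, ht', hst, hxe2⟩ := hx2
        have hdx : det3 d u' x = α * det3 d u' z + β * det3 d u' d := by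
          rw [← hxe, det3_affine _ _ _ _ _ _ hαβ]
        rw [det3_id1] at hdx
        have hdx2 : det3 d u' x = s * det3 d u' a + t' * det3 d u' b := by
          rw [← hxe2, det3_affine _ _ _ _ _ _ hst]
        have hma := mem_of_mem_edgeList_s6 hab
        have ha0 : 0 ≤ ρ * det3 d u' a := htail_nonneg a hma.1
        have hb0 : 0 ≤ ρ * det3 d u' b := htail_nonneg b hma.2
        have hα0 : α = 0 := by
          by_contra hα0
          have hαpos : 0 < α := lt_of_le_of_ne hα (Ne.symm hα0)
          have h1 : ρ * det3 d u' x < 0 := by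
            have he : ρ * det3 d u' x = α * (ρ * det3 d u' z) := by rw [hdx]; ring
            rw [he]; exact mul_neg_of_pos_of_neg hαpos hB
          have h2 : 0 ≤ ρ * det3 d u' x := by
            have he : ρ * det3 d u' x = s * (ρ * det3 d u' a) + t' * (ρ * det3 d u' b) := by
              rw [hdx2]; ring
            rw [he]; exact add_nonneg (mul_nonneg hs ha0) (mul_nonneg ht' hb0)
          linarith
        have hβ1 : β = 1 := by linarith
        have hxd : x = d := by rw [← hxe, hα0, hβ1]; simp
        have hdmem : d = a ∨ d = b := by
          by_contra hcon
          push_neg at hcon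
          have hd_det : det3 a b d = 0 := by
            have he : det3 a b x = s * det3 a b a + t' * det3 a b b := by
              rw [← hxe2, det3_affine _ _ _ _ _ _ hst]
            rw [det3_id1, det3_id2, hxd] at he
            rw [he]; ring
          have haS : a ∈ D ∪ U := (hmem_l' a hma.1).1
          have hbS : b ∈ D ∪ U := (hmem_l' b hma.2).1
          have hdSS : d ∈ D ∪ U := Finset.mem_union_left _ hd
          have habne : a ≠ b := ne_of_mem_edgeList hnd' hab
          exact det3_ne_of_genpos hgp haS hbS hdSS habne
            (Ne.symm hcon.1) (Ne.symm hcon.2) hd_det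
        constructor
        · rw [hxd]; exact Set.mem_insert_iff.mpr (Or.inr rfl)
        · rcases hdmem with h | h
          · rw [hxd, h]; exact Set.mem_insert _ _
          · rw [hxd, h]; exact Set.mem_insert_iff.mpr (Or.inr rfl)
      refine ⟨z :: d :: t, ⟨List.nodup_cons.mpr ⟨hzl', hnd'⟩, ?_, ?_⟩, rfl, ?_⟩
      · show (z :: d :: t).toFinset = D ∪ U
        rw [List.toFinset_cons, htf']
        ext p
        rw [Finset.mem_insert, hset p]
        constructor
        · rintro (rfl | ⟨h1, _⟩)
          · exact Finset.mem_union_right _ hz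
          · exact h1
        · intro hp
          by_cases hpz : p = z
          · exact Or.inl hpz
          · exact Or.inr ⟨hp, hpz⟩
      · intro e he f' hf' hef
        rw [edgeList_cons₂'] at he hf'
        rcases List.mem_cons.mp he with he1 | he2 <;> rcases List.mem_cons.mp hf' with hf1 | hf2
        · exact absurd (he1.trans hf1.symm) hef
        · subst he1
          intro x hx
          exact hmixed f'.1 f'.2 (by rwa [Prod.mk.eta]) hx
        · subst hf1
          rintro x ⟨hx1, hx2⟩
          have := hmixed e.1 e.2 (by rwa [Prod.mk.eta]) ⟨hx2, hx1⟩
          exact ⟨this.2, this.1⟩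
        · exact hpl' e he2 f' hf2 hef
      · intro e he
        rw [edgeList_cons₂'] at he
        rcases List.mem_cons.mp he with he1 | he2
        · subst he1
          exact Or.inr ⟨hz, hd⟩
        · rcases hbi' e he2 with ⟨h1, h2⟩ | ⟨h1, h2⟩
          · exact Or.inr ⟨Finset.mem_of_mem_erase h1, h2⟩
          · exact Or.inl ⟨h1, Finset.mem_of_mem_erase h2⟩
    · have hUz : U = {z} := by
        apply Finset.eq_singleton_iff_unique_mem.mpr
        refine ⟨hz, fun x hx => ?_⟩
        by_contra hxz
        exact hU' ⟨x, Finset.mem_erase.mpr ⟨hxz, hx⟩⟩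
      have hDw : D = {w} := by
        apply Finset.eq_singleton_iff_unique_mem.mpr
        refine ⟨hw, fun x hx => ?_⟩
        have hcard : D.card ≤ 1 := by rw [hUz] at hc1; simpa using hc1
        exact Finset.card_le_one.mp hcard x hx w hw
      refine ⟨[z, w], ⟨?_, ?_, ?_⟩, rfl, ?_⟩
      · simp [hzw_ne]
      · rw [hDw, hUz]
        ext p
        simp [or_comm]
      · intro e he f' hf' hef
        have : edgeList [z, w] = [(z, w)] := rfl
        rw [this, List.mem_singleton] at he hf'
        exact absurd (he.trans hf'.symm) hef
      · intro e he
        have : edgeList [z, w] = [(z, w)] := rfl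
        rw [this, List.mem_singleton] at he
        subst he
        exact Or.inr ⟨hz, hw⟩

/-- For linearly separated sets `S_down`, `S_up` with
`|S_down| ≤ |S_up| ≤ |S_down| + 1`, and `z ∈ S_up` a hull vertex of the union adjacent on
the hull boundary to a vertex of `S_down`, there is a plane Hamiltonian path on the union
starting at `z` all of whose edges go between `S_down` and `S_up`. -/
theorem stmt_6 (Sdown Sup : Finset Pt)
    (hgp : GenPos (Sdown ∪ Sup))
    (hcard₁ : Sdown.card ≤ Sup.card) (hcard₂ : Sup.card ≤ Sdown.card + 1)
    (hsep : ∃ (f : Pt →ₗ[ℝ] ℝ) (c : ℝ), (∀ p ∈ Sdown, f p < c) ∧ (∀ q ∈ Sup, c < f q))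
    (z : Pt) (hz : z ∈ Sup)
    (hzadj : ∃ w ∈ Sdown, IsHullEdge (Sdown ∪ Sup) z w) :
    ∃ l : List Pt, PlanePath (Sdown ∪ Sup) l ∧ l.head? = some z ∧
      ∀ e ∈ edgeList l, (e.1 ∈ Sdown ∧ e.2 ∈ Sup) ∨ (e.1 ∈ Sup ∧ e.2 ∈ Sdown) := by
  exact stmt6_aux (Sdown.card + Sup.card) Sdown Sup le_rfl hgp hcard₁ hcard₂ hsep z hz hzadj
end
end
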